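/- arXiv:2507.18835 — 6 statements merged into one kernel-verified Lean document; each statement's English description precedes it below -/
import Mathlib

section
/- Let Z be a RF on a complete non-atomic probability space satisfying (★), and suppose the class C[Z] is nonempty. Then C[Z] contains an L^α-continuous element, i.e., there exists a RF Z* belonging to C[Z] such that for every t ∈ T, E[‖Z*(s) − Z*(t)‖^α] → 0 as s → t. -/
open MeasureTheory ProbabilityTheory Filter
open scoped ENNReal Topology

noncomputable section

abbrev Tsp (l : ℕ) : Type := EuclideanSpace ℝ (Fin l)
abbrev Vsp (d : ℕ) : Type := EuclideanSpace ℝ (Fin d)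
abbrev RPath (l d : ℕ) : Type := Tsp l → Vsp d

/-- The shift `B^h f = f(· − h)`. -/
def shift {l d : ℕ} (h : Tsp l) (f : RPath l d) : RPath l d := fun t => f (t - h)

/-- Joint measurability of a random field. -/
def JointlyMeasurable {Ω : Type*} [MeasurableSpace Ω] {l d : ℕ} (Z : Ω → RPath l d) : Prop :=
  Measurable fun p : Ω × Tsp l => Z p.1 p.2

/-- `F ∈ H_β`: product-measurable and `β`-homogeneous maps on path space. -/
def Hom (l d : ℕ) (β : ℝ) (F : RPath l d → ℝ≥0∞) : Prop :=
  Measurable F ∧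
  ∀ c : ℝ, 0 < c → ∀ f : RPath l d,
    F (fun t => c • f t) = ENNReal.ofReal (c ^ β) * F f

/-- Condition (★). -/
def StarC {Ω : Type*} [MeasurableSpace Ω] (P : Measure Ω) {l d : ℕ} (α : ℝ)
    (Z : Ω → RPath l d) : Prop :=
  JointlyMeasurable Z ∧
  (∫⁻ ω, ENNReal.ofReal (‖Z ω 0‖ ^ α) ∂P) = 1 ∧
  ∃ T₀ : Set (Tsp l), T₀.Countable ∧ P {ω | ∃ t ∈ T₀, 0 < ‖Z ω t‖} = 1

/-- `Z̃ ∈ C[Z]`. -/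
def MemC {Ω Ω' : Type*} [MeasurableSpace Ω] [MeasurableSpace Ω']
    (P : Measure Ω) (P' : Measure Ω') {l d : ℕ} (α : ℝ)
    (Z : Ω → RPath l d) (ZT : Ω' → RPath l d) : Prop :=
  StarC P' α ZT ∧
  ∀ F : RPath l d → ℝ≥0∞, Hom l d α F → ∀ h : Tsp l,
    (∫⁻ ω, F (Z ω) ∂P) = ∫⁻ ω', F (shift h (ZT ω')) ∂P'

/-- `S_γ(f) = ∫ ‖f(t)‖^α γ(t) dt`. -/
def Sgam {l d : ℕ} (α : ℝ) (γ : Tsp l → ℝ) (f : RPath l d) : ℝ≥0∞ :=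
  ∫⁻ t, ENNReal.ofReal (‖f t‖ ^ α * γ t)

/-- `S(f) = ∫ ‖f(t)‖^α dt`. -/
def Sfun {l d : ℕ} (α : ℝ) (f : RPath l d) : ℝ≥0∞ :=
  ∫⁻ t, ENNReal.ofReal (‖f t‖ ^ α)

/-- The local random field `Z̃/‖Z̃(0)‖` (set to `0` where `‖Z̃(0)‖ = 0`). -/
def localRF {Ω : Type*} {l d : ℕ} (ZT : Ω → RPath l d) (ω : Ω) : RPath l d :=
  fun t => if ‖ZT ω 0‖ = 0 then 0 else ‖ZT ω 0‖⁻¹ • ZT ω t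

/-- The tilted measure `P̂`. -/
def tilted {Ω : Type*} [MeasurableSpace Ω] (P : Measure Ω) {l d : ℕ} (α : ℝ)
    (ZT : Ω → RPath l d) : Measure Ω :=
  P.withDensity fun ω => ENNReal.ofReal (‖ZT ω 0‖ ^ α)

open Set
open scoped symmDiff

lemma qtri {d : ℕ} {α : ℝ} (hα : 0 < α) (a b : Vsp d) :
    ENNReal.ofReal (‖a + b‖ ^ α) ≤
      ENNReal.ofReal ((2:ℝ) ^ α) * (ENNReal.ofReal (‖a‖ ^ α) + ENNReal.ofReal (‖b‖ ^ α)) := by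
  set m := max ‖a‖ ‖b‖ with hm
  have hm0 : 0 ≤ m := le_trans (norm_nonneg a) (le_max_left _ _)
  have h1 : ‖a + b‖ ^ α ≤ (2 * m) ^ α := by
    apply Real.rpow_le_rpow (norm_nonneg _) _ hα.le
    calc ‖a + b‖ ≤ ‖a‖ + ‖b‖ := norm_add_le _ _
      _ ≤ m + m := add_le_add (le_max_left _ _) (le_max_right _ _)
      _ = 2 * m := (two_mul m).symm
  have h2 : (2 * m) ^ α = 2 ^ α * m ^ α := Real.mul_rpow (by norm_num) hm0
  have h3 : m ^ α ≤ ‖a‖ ^ α + ‖b‖ ^ α := by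
    rcases max_cases ‖a‖ ‖b‖ with ⟨h, _⟩ | ⟨h, _⟩ <;> rw [hm, h]
    · exact le_add_of_nonneg_right (Real.rpow_nonneg (norm_nonneg _) _)
    · exact le_add_of_nonneg_left (Real.rpow_nonneg (norm_nonneg _) _)
  calc ENNReal.ofReal (‖a + b‖ ^ α) ≤ ENNReal.ofReal (2 ^ α * (‖a‖ ^ α + ‖b‖ ^ α)) := by
        apply ENNReal.ofReal_le_ofReal
        refine h1.trans ?_
        rw [h2]
        exact mul_le_mul_of_nonneg_left h3 (Real.rpow_nonneg (by norm_num) _)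
    _ = ENNReal.ofReal ((2:ℝ) ^ α) * (ENNReal.ofReal (‖a‖ ^ α) + ENNReal.ofReal (‖b‖ ^ α)) := by
        rw [ENNReal.ofReal_mul (Real.rpow_nonneg (by norm_num) _),
          ENNReal.ofReal_add (Real.rpow_nonneg (norm_nonneg _) _)
            (Real.rpow_nonneg (norm_nonneg _) _)]

lemma trans_set {l : ℕ} {S : Set (Tsp l)} (hS : MeasurableSet S) (hfin : volume S ≠ ∞) :
    Tendsto (fun u : Tsp l => volume (((fun t => t + u) ⁻¹' S) ∆ S)) (𝓝 0) (𝓝 0) := by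
  set F : C(Tsp l × Tsp l, Tsp l) := ⟨fun p => p.2 + p.1, by fun_prop⟩ with hF
  have key := tendsto_measure_symmDiff_preimage_nhds_zero (μ := (volume : Measure (Tsp l)))
    (ν := (volume : Measure (Tsp l)))
    ((F.curry.continuous.tendsto 0))
    (Filter.Eventually.of_forall fun u => (measurePreserving_add_right volume u :
      MeasurePreserving (fun t : Tsp l => t + u) volume volume))
    ((measurePreserving_add_right volume 0 :
      MeasurePreserving (fun t : Tsp l => t + 0) volume volume))
    hS.nullMeasurableSet hfin
  have heq : (fun u : Tsp l => volume (((fun t => t + u) ⁻¹' S) ∆ S)) =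
      fun u : Tsp l => volume ((⇑(F.curry u) ⁻¹' S) ∆ (⇑(F.curry 0) ⁻¹' S)) := by
    funext u
    congr 1
    have h1 : ⇑(F.curry u) ⁻¹' S = (fun t => t + u) ⁻¹' S := rfl
    have h2 : ⇑(F.curry 0) ⁻¹' S = S := by
      ext t; simp [hF, ContinuousMap.curry_apply]
    rw [h1, h2]
  rw [heq]
  exact key


lemma trans_prod {Ω : Type*} [MeasurableSpace Ω] (P : Measure Ω) [IsProbabilityMeasure P]
    {l : ℕ} {E : Set (Ω × Tsp l)} (hE : MeasurableSet E) (hfin : P.prod volume E ≠ ∞) :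
    Tendsto (fun u : Tsp l =>
      P.prod volume (((fun p : Ω × Tsp l => (p.1, p.2 + u)) ⁻¹' E) ∆ E)) (𝓝 0) (𝓝 0) := by
  have hτ : ∀ u : Tsp l, Measurable (fun p : Ω × Tsp l => (p.1, p.2 + u)) :=
    fun u => measurable_fst.prodMk (measurable_snd.add_const u)
  have hD : ∀ u : Tsp l, MeasurableSet (((fun p : Ω × Tsp l => (p.1, p.2 + u)) ⁻¹' E) ∆ E) :=
    fun u => ((hτ u) hE).symmDiff hE
  have hslice : ∀ ω, MeasurableSet (Prod.mk ω ⁻¹' E) := fun ω => measurable_prodMk_left hE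
  have hrw : ∀ u : Tsp l, P.prod volume (((fun p : Ω × Tsp l => (p.1, p.2 + u)) ⁻¹' E) ∆ E)
      = ∫⁻ ω, volume (((fun t : Tsp l => t + u) ⁻¹' (Prod.mk ω ⁻¹' E)) ∆ (Prod.mk ω ⁻¹' E)) ∂P := by
    intro u
    rw [Measure.prod_apply (hD u)]
    congr 1
  have hfin' : (∫⁻ ω, volume (Prod.mk ω ⁻¹' E) ∂P) ≠ ∞ := by
    rw [← Measure.prod_apply hE]; exact hfin
  simp only [hrw]
  have key := tendsto_lintegral_filter_of_dominated_convergence (μ := P)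
    (l := 𝓝 (0 : Tsp l))
    (F := fun u ω => volume (((fun t : Tsp l => t + u) ⁻¹' (Prod.mk ω ⁻¹' E)) ∆ (Prod.mk ω ⁻¹' E)))
    (f := fun _ => 0)
    (fun ω => 2 * volume (Prod.mk ω ⁻¹' E))
    (Filter.Eventually.of_forall fun u => by
      have : (fun ω => volume (((fun t : Tsp l => t + u) ⁻¹' (Prod.mk ω ⁻¹' E)) ∆ (Prod.mk ω ⁻¹' E)))
          = fun ω => volume (Prod.mk ω ⁻¹' (((fun p : Ω × Tsp l => (p.1, p.2 + u)) ⁻¹' E) ∆ E)) := by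
        funext ω; congr 1
      show Measurable fun ω => volume
        (((fun t : Tsp l => t + u) ⁻¹' (Prod.mk ω ⁻¹' E)) ∆ (Prod.mk ω ⁻¹' E))
      rw [this]
      exact measurable_measure_prodMk_left (hD u))
    (Filter.Eventually.of_forall fun u => Filter.Eventually.of_forall fun ω => by
      calc volume (((fun t : Tsp l => t + u) ⁻¹' (Prod.mk ω ⁻¹' E)) ∆ (Prod.mk ω ⁻¹' E))
          ≤ volume ((fun t : Tsp l => t + u) ⁻¹' (Prod.mk ω ⁻¹' E)) + volume (Prod.mk ω ⁻¹' E) :=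
            (measure_mono symmDiff_subset_union).trans (measure_union_le _ _)
        _ = 2 * volume (Prod.mk ω ⁻¹' E) := by
            rw [(measurePreserving_add_right volume u).measure_preimage
              (hslice ω).nullMeasurableSet, two_mul])
    (by
      rw [lintegral_const_mul 2 (measurable_measure_prodMk_left hE)]
      exact ENNReal.mul_ne_top (by norm_num) hfin')
    (by
      refine (ae_lt_top (measurable_measure_prodMk_left hE) hfin').mono fun ω hω => ?_
      exact trans_set (hslice ω) hω.ne)
  simpa using key

lemma trans_simple {Ω : Type*} [MeasurableSpace Ω] (P : Measure Ω) [IsProbabilityMeasure P]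
    {l d : ℕ} {α : ℝ} (hα : 0 < α) (s : SimpleFunc (Ω × Tsp l) (Vsp d)) :
    P.prod volume (Function.support ⇑s) ≠ ∞ →
    Tendsto (fun u : Tsp l => ∫⁻ p : Ω × Tsp l,
      ENNReal.ofReal (‖s (p.1, p.2 + u) - s p‖ ^ α) ∂(P.prod volume)) (𝓝 0) (𝓝 0) := by
  induction s using MeasureTheory.SimpleFunc.induction with
  | const c hS =>
    intro hsupp
    rename_i S
    by_cases hc : c = 0
    · subst hc
      have : ∀ u : Tsp l, (fun p : Ω × Tsp l => ENNReal.ofReal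
          (‖(SimpleFunc.piecewise S hS (SimpleFunc.const _ (0 : Vsp d)) (SimpleFunc.const _ 0))
            (p.1, p.2 + u) -
           (SimpleFunc.piecewise S hS (SimpleFunc.const _ (0 : Vsp d)) (SimpleFunc.const _ 0)) p‖
            ^ α)) = fun _ => 0 := by
        intro u; funext p
        simp [SimpleFunc.coe_piecewise, SimpleFunc.coe_const, Set.piecewise,
          Real.zero_rpow hα.ne', apply_ite]
      simp only [this, lintegral_zero]
      exact tendsto_const_nhds
    · have hsuppS : Function.support
          ⇑(SimpleFunc.piecewise S hS (SimpleFunc.const _ c) (SimpleFunc.const _ 0)) = S := by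
        ext p
        simp [SimpleFunc.coe_piecewise, SimpleFunc.coe_const, Set.piecewise, hc,
          Function.mem_support]
      rw [hsuppS] at hsupp
      have key : ∀ u : Tsp l, (∫⁻ p : Ω × Tsp l, ENNReal.ofReal
          (‖(SimpleFunc.piecewise S hS (SimpleFunc.const _ c) (SimpleFunc.const _ 0))
              (p.1, p.2 + u) -
            (SimpleFunc.piecewise S hS (SimpleFunc.const _ c) (SimpleFunc.const _ 0)) p‖ ^ α)
            ∂(P.prod volume))
          = ENNReal.ofReal (‖c‖ ^ α) *
            P.prod volume (((fun p : Ω × Tsp l => (p.1, p.2 + u)) ⁻¹' S) ∆ S) := by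
        intro u
        have hint : (fun p : Ω × Tsp l => ENNReal.ofReal
            (‖(SimpleFunc.piecewise S hS (SimpleFunc.const _ c) (SimpleFunc.const _ 0))
                (p.1, p.2 + u) -
              (SimpleFunc.piecewise S hS (SimpleFunc.const _ c) (SimpleFunc.const _ 0)) p‖ ^ α))
            = Set.indicator (((fun p : Ω × Tsp l => (p.1, p.2 + u)) ⁻¹' S) ∆ S)
                (fun _ => ENNReal.ofReal (‖c‖ ^ α)) := by
          funext p
          simp only [SimpleFunc.coe_piecewise, SimpleFunc.coe_const, Set.piecewise]
          by_cases h1 : (p.1, p.2 + u) ∈ S <;> by_cases h2 : p ∈ S <;>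
            simp [h1, h2, Set.indicator_apply, Set.mem_symmDiff, Real.zero_rpow hα.ne',
              norm_sub_rev]
        rw [hint, lintegral_indicator
          (((measurable_fst.prodMk (measurable_snd.add_const u)) hS).symmDiff hS),
          setLIntegral_const]
      simp only [key]
      have := ENNReal.Tendsto.const_mul (a := ENNReal.ofReal (‖c‖ ^ α))
        (trans_prod P hS hsupp) (Or.inr ENNReal.ofReal_ne_top)
      simpa using this
  | @add f g hdis ihf ihg =>
    intro hsupp
    have hsf : Function.support ⇑f ⊆ Function.support ⇑(f + g) := by
      intro x hx
      have hgx : g x = 0 := by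
        by_contra h
        exact (Set.disjoint_left.mp hdis) hx h
      simp only [Function.mem_support, SimpleFunc.coe_add, Pi.add_apply, hgx, add_zero]
      exact hx
    have hsg : Function.support ⇑g ⊆ Function.support ⇑(f + g) := by
      intro x hx
      have hfx : f x = 0 := by
        by_contra h
        exact (Set.disjoint_right.mp hdis) hx h
      simp only [Function.mem_support, SimpleFunc.coe_add, Pi.add_apply, hfx, zero_add]
      exact hx
    have hf' := ihf (ne_top_of_le_ne_top hsupp (measure_mono hsf))
    have hg' := ihg (ne_top_of_le_ne_top hsupp (measure_mono hsg))
    set C := ENNReal.ofReal ((2:ℝ) ^ α) with hC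
    have hpt : ∀ (u : Tsp l) (p : Ω × Tsp l),
        ENNReal.ofReal (‖(f + g) (p.1, p.2 + u) - (f + g) p‖ ^ α) ≤
          C * (ENNReal.ofReal (‖f (p.1, p.2 + u) - f p‖ ^ α) +
               ENNReal.ofReal (‖g (p.1, p.2 + u) - g p‖ ^ α)) := by
      intro u p
      have : (f + g) (p.1, p.2 + u) - (f + g) p
          = (f (p.1, p.2 + u) - f p) + (g (p.1, p.2 + u) - g p) := by
        simp only [SimpleFunc.coe_add, Pi.add_apply]; abel
      rw [this]
      exact qtri hα _ _
    have hmf : ∀ u : Tsp l, Measurable (fun p : Ω × Tsp l =>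
        ENNReal.ofReal (‖f (p.1, p.2 + u) - f p‖ ^ α)) := by
      intro u
      exact ENNReal.measurable_ofReal.comp ((Real.continuous_rpow_const hα.le).measurable.comp
        (((f.measurable.comp (measurable_fst.prodMk (measurable_snd.add_const u))).sub
          f.measurable).norm))
    have hmg : ∀ u : Tsp l, Measurable (fun p : Ω × Tsp l =>
        ENNReal.ofReal (‖g (p.1, p.2 + u) - g p‖ ^ α)) := by
      intro u
      exact ENNReal.measurable_ofReal.comp ((Real.continuous_rpow_const hα.le).measurable.comp
        (((g.measurable.comp (measurable_fst.prodMk (measurable_snd.add_const u))).sub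
          g.measurable).norm))
    have hle : ∀ u : Tsp l, (∫⁻ p : Ω × Tsp l,
        ENNReal.ofReal (‖(f + g) (p.1, p.2 + u) - (f + g) p‖ ^ α) ∂(P.prod volume)) ≤
        C * ((∫⁻ p : Ω × Tsp l, ENNReal.ofReal (‖f (p.1, p.2 + u) - f p‖ ^ α) ∂(P.prod volume)) +
             (∫⁻ p : Ω × Tsp l, ENNReal.ofReal (‖g (p.1, p.2 + u) - g p‖ ^ α) ∂(P.prod volume))) := by
      intro u
      calc (∫⁻ p, ENNReal.ofReal (‖(f + g) (p.1, p.2 + u) - (f + g) p‖ ^ α) ∂(P.prod volume))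
          ≤ ∫⁻ p, C * (ENNReal.ofReal (‖f (p.1, p.2 + u) - f p‖ ^ α) +
              ENNReal.ofReal (‖g (p.1, p.2 + u) - g p‖ ^ α)) ∂(P.prod volume) :=
            lintegral_mono (hpt u)
        _ = _ := by
            rw [lintegral_const_mul C (f := fun p => ENNReal.ofReal (‖f (p.1, p.2 + u) - f p‖ ^ α) +
                ENNReal.ofReal (‖g (p.1, p.2 + u) - g p‖ ^ α)) ((hmf u).add (hmg u)),
              lintegral_add_left (hmf u)]
    have hupper : Tendsto (fun u : Tsp l => C * ((∫⁻ p : Ω × Tsp l,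
        ENNReal.ofReal (‖f (p.1, p.2 + u) - f p‖ ^ α) ∂(P.prod volume)) +
        (∫⁻ p : Ω × Tsp l, ENNReal.ofReal (‖g (p.1, p.2 + u) - g p‖ ^ α) ∂(P.prod volume))))
        (𝓝 0) (𝓝 0) := by
      have := ENNReal.Tendsto.const_mul (a := C) (hf'.add hg')
        (Or.inr (by simp [hC]))
      simpa using this
    exact tendsto_of_tendsto_of_tendsto_of_le_of_le tendsto_const_nhds hupper
      (fun u => zero_le) hle

/-- a nonempty class `C[Z]` contains an `L^α`-continuous element. -/
theorem stmt0 {Ω : Type*} [MeasurableSpace Ω] (P : Measure Ω)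
    [IsProbabilityMeasure P] (hPc : P.IsComplete) [NullSingletonClass P]
    {l d : ℕ} (hl : 1 ≤ l) (hd : 1 ≤ d) (α : ℝ) (hα : 0 < α)
    (Z : Ω → RPath l d) (hZ : StarC P α Z)
    (hne : ∃ ZT : Ω → RPath l d, MemC P P α Z ZT) :
    ∃ Zstar : Ω → RPath l d, MemC P P α Z Zstar ∧
      ∀ t : Tsp l,
        Tendsto (fun s : Tsp l => ∫⁻ ω, ENNReal.ofReal (‖Zstar ω s - Zstar ω t‖ ^ α) ∂P)
          (𝓝 t) (𝓝 0) := by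
  obtain ⟨ZT, hZTstar, hId⟩ := hne
  have hZTm : Measurable fun p : Ω × Tsp l => ZT p.1 p.2 := hZTstar.1
  -- measurable, homogeneous functionals on path space
  have measF : ∀ a b : Tsp l, Measurable fun f : RPath l d =>
      ENNReal.ofReal (‖f a - f b‖ ^ α) := fun a b =>
    ENNReal.measurable_ofReal.comp ((Real.continuous_rpow_const hα.le).measurable.comp
      ((measurable_pi_apply a).sub (measurable_pi_apply b)).norm)
  have homF : ∀ a b : Tsp l, Hom l d α (fun f : RPath l d =>
      ENNReal.ofReal (‖f a - f b‖ ^ α)) := by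
    intro a b
    refine ⟨measF a b, fun c hc f => ?_⟩
    show ENNReal.ofReal (‖c • f a - c • f b‖ ^ α) = _
    rw [← smul_sub, norm_smul, Real.norm_of_nonneg hc.le,
      Real.mul_rpow hc.le (norm_nonneg _), ENNReal.ofReal_mul (Real.rpow_nonneg hc.le _)]
  set G : Tsp l → ℝ≥0∞ := fun u => ∫⁻ ω, ENNReal.ofReal (‖Z ω u - Z ω 0‖ ^ α) ∂P with hGdef
  have hG : ∀ s t : Tsp l,
      (∫⁻ ω, ENNReal.ofReal (‖ZT ω s - ZT ω t‖ ^ α) ∂P) = G (s - t) := by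
    intro s t
    have h := hId _ (homF (s - t) 0) (-t)
    simp only [shift, sub_neg_eq_add, zero_add, sub_add_cancel] at h
    exact h.symm
  have hOne : ∀ t : Tsp l, (∫⁻ ω, ENNReal.ofReal (‖ZT ω t‖ ^ α) ∂P) = 1 := by
    intro t
    have hHom0 : Hom l d α (fun f : RPath l d => ENNReal.ofReal (‖f 0‖ ^ α)) := by
      refine ⟨ENNReal.measurable_ofReal.comp ((Real.continuous_rpow_const hα.le).measurable.comp
        (measurable_pi_apply 0).norm), fun c hc f => ?_⟩
      show ENNReal.ofReal (‖c • f 0‖ ^ α) = _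
      rw [norm_smul, Real.norm_of_nonneg hc.le, Real.mul_rpow hc.le (norm_nonneg _),
        ENNReal.ofReal_mul (Real.rpow_nonneg hc.le _)]
    have h := hId _ hHom0 (-t)
    simp only [shift, zero_sub, neg_neg] at h
    rw [← h]
    exact hZ.2.1
  -- the truncated field on the product space
  set μprod := P.prod (volume : Measure (Tsp l)) with hμprod
  set ψ : Ω × Tsp l → Vsp d := fun p => if ‖p.2‖ < 2 then ZT p.1 p.2 else 0 with hψ
  have hcond : MeasurableSet {p : Ω × Tsp l | ‖p.2‖ < 2} :=
    measurableSet_lt measurable_snd.norm measurable_const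
  have hψm : Measurable ψ := Measurable.ite hcond hZTm measurable_const
  have hmg : ∀ u : Tsp l, Measurable fun p : Ω × Tsp l =>
      ENNReal.ofReal (‖ψ (p.1, p.2 + u) - ψ p‖ ^ α) := fun u =>
    ENNReal.measurable_ofReal.comp ((Real.continuous_rpow_const hα.le).measurable.comp
      (((hψm.comp (measurable_fst.prodMk (measurable_snd.add_const u))).sub hψm).norm))
  have hmψα : Measurable fun p : Ω × Tsp l => ENNReal.ofReal (‖ψ p‖ ^ α) :=
    ENNReal.measurable_ofReal.comp ((Real.continuous_rpow_const hα.le).measurable.comp hψm.norm)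
  have hψint : (∫⁻ p, ENNReal.ofReal (‖ψ p‖ ^ α) ∂μprod)
      = volume (Metric.ball (0 : Tsp l) 2) := by
    rw [hμprod, lintegral_prod_symm _ hmψα.aemeasurable]
    have e : ∀ t : Tsp l, (∫⁻ ω, ENNReal.ofReal (‖ψ (ω, t)‖ ^ α) ∂P)
        = Set.indicator (Metric.ball (0 : Tsp l) 2) (fun _ => (1 : ℝ≥0∞)) t := by
      intro t
      by_cases h : ‖t‖ < 2
      · have ht : t ∈ Metric.ball (0 : Tsp l) 2 := by
          rw [Metric.mem_ball, dist_zero_right]; exact h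
        rw [Set.indicator_of_mem ht]
        simp only [hψ, if_pos h]
        exact hOne t
      · have ht : t ∉ Metric.ball (0 : Tsp l) 2 := by
          rw [Metric.mem_ball, dist_zero_right]; exact h
        rw [Set.indicator_of_notMem ht]
        simp [hψ, h, Real.zero_rpow hα.ne']
    rw [lintegral_congr e, lintegral_indicator measurableSet_ball, setLIntegral_const,
      one_mul]
  have hψfin : (∫⁻ p, ENNReal.ofReal (‖ψ p‖ ^ α) ∂μprod) ≠ ∞ := by
    rw [hψint]; exact measure_ball_lt_top.ne
  -- translation invariance of the product measure
  have hinv : ∀ g : Ω × Tsp l → ℝ≥0∞, Measurable g → ∀ u : Tsp l,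
      (∫⁻ p, g (p.1, p.2 + u) ∂μprod) = ∫⁻ p, g p ∂μprod := by
    intro g hg u
    rw [hμprod, lintegral_prod (fun z : Ω × Tsp l => g (z.1, z.2 + u))
        ((hg.comp (measurable_fst.prodMk (measurable_snd.add_const u))).aemeasurable),
      lintegral_prod g hg.aemeasurable]
    refine lintegral_congr fun ω => ?_
    exact lintegral_add_right_eq_self (fun t => g (ω, t)) u
  -- approximation by simple functions
  have happrox : ∀ ε : ℝ≥0∞, 0 < ε → ∃ s : SimpleFunc (Ω × Tsp l) (Vsp d),
      μprod (Function.support ⇑s) ≠ ∞ ∧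
      (∫⁻ p, ENNReal.ofReal (‖ψ p - s p‖ ^ α) ∂μprod) ≤ ε := by
    intro ε hε
    set a : ℕ → SimpleFunc (Ω × Tsp l) (Vsp d) :=
      fun n => SimpleFunc.approxOn ψ hψm Set.univ 0 (Set.mem_univ 0) n with ha
    have hstrip : μprod {p : Ω × Tsp l | ‖p.2‖ < 2} ≠ ∞ := by
      have : {p : Ω × Tsp l | ‖p.2‖ < 2} = Set.univ ×ˢ Metric.ball (0 : Tsp l) 2 := by
        ext p
        simp [Set.mem_prod, Metric.mem_ball, dist_zero_right]
      rw [hμprod, this, Measure.prod_prod, measure_univ, one_mul]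
      exact measure_ball_lt_top.ne
    have hsupp : ∀ n, μprod (Function.support ⇑(a n)) ≠ ∞ := by
      intro n
      refine ne_top_of_le_ne_top hstrip (measure_mono ?_)
      intro p hp
      by_contra h
      have hψ0 : ψ p = 0 := by
        simp only [Set.mem_setOf_eq] at h
        simp only [hψ]; rw [if_neg h]
      have hle := SimpleFunc.edist_approxOn_le hψm (Set.mem_univ (0 : Vsp d)) p n
      rw [hψ0] at hle
      simp only [edist_self] at hle
      exact hp (edist_le_zero.mp (le_of_le_of_eq hle rfl) ▸ rfl) |>.elim
    have htd : Tendsto (fun n => ∫⁻ p, ENNReal.ofReal (‖ψ p - a n p‖ ^ α) ∂μprod)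
        atTop (𝓝 0) := by
      have h0 : (𝓝 (0 : ℝ≥0∞)) = 𝓝 (∫⁻ p, (fun _ => (0:ℝ≥0∞)) p ∂μprod) := by simp
      rw [h0]
      refine tendsto_lintegral_of_dominated_convergence
        (fun p => ENNReal.ofReal (‖ψ p‖ ^ α)) (fun n => ?_) (fun n => ?_) hψfin ?_
      · exact ENNReal.measurable_ofReal.comp
          ((Real.continuous_rpow_const hα.le).measurable.comp
            ((hψm.sub (a n).measurable).norm))
      · refine Filter.Eventually.of_forall fun p => ?_
        apply ENNReal.ofReal_le_ofReal
        apply Real.rpow_le_rpow (norm_nonneg _) ?_ hα.le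
        have hle := SimpleFunc.edist_approxOn_le hψm (Set.mem_univ (0 : Vsp d)) p n
        rw [edist_comm] at hle
        rw [edist_nndist, edist_nndist] at hle
        have := (ENNReal.coe_le_coe.mp hle : nndist (ψ p) (a n p) ≤ nndist (0:Vsp d) (ψ p))
        calc ‖ψ p - a n p‖ = dist (ψ p) (a n p) := (dist_eq_norm _ _).symm
          _ ≤ dist (0 : Vsp d) (ψ p) := this
          _ = ‖ψ p‖ := by rw [dist_comm, dist_zero_right]
      · refine Filter.Eventually.of_forall fun p => ?_
        have hconv := SimpleFunc.tendsto_approxOn hψm (Set.mem_univ (0 : Vsp d))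
          (x := p) (by simp)
        have hcont : Continuous fun v : Vsp d => ENNReal.ofReal (‖ψ p - v‖ ^ α) :=
          ENNReal.continuous_ofReal.comp ((Real.continuous_rpow_const hα.le).comp
            (continuous_const.sub continuous_id).norm)
        have := (hcont.tendsto (ψ p)).comp hconv
        simpa [Real.zero_rpow hα.ne', ha, Function.comp_def] using this
    have := (htd.eventually_lt_const hε).exists
    obtain ⟨n, hn⟩ := this
    exact ⟨a n, hsupp n, hn.le⟩
  -- the translated L^α distance of ψ tends to zero
  set I : Tsp l → ℝ≥0∞ :=
    fun u => ∫⁻ p, ENNReal.ofReal (‖ψ (p.1, p.2 + u) - ψ p‖ ^ α) ∂μprod with hIdef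
  have hI0 : Tendsto I (𝓝 0) (𝓝 0) := by
    rw [ENNReal.tendsto_nhds_zero]
    intro ε hε
    set C := ENNReal.ofReal ((2:ℝ) ^ α) with hCdef
    have hC0 : C ≠ 0 := by
      rw [hCdef]
      simp only [ne_eq, ENNReal.ofReal_eq_zero, not_le]
      exact Real.rpow_pos_of_pos (by norm_num) α
    have hCt : C ≠ ∞ := ENNReal.ofReal_ne_top
    have hden0 : C + C * C ≠ 0 := fun h => hC0 (by simpa using (add_eq_zero.mp h).1)
    have hdent : C + C * C ≠ ∞ := ENNReal.add_ne_top.mpr ⟨hCt, ENNReal.mul_ne_top hCt hCt⟩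
    have hCC0 : C * C ≠ 0 := mul_ne_zero hC0 hC0
    have hCCt : C * C ≠ ∞ := ENNReal.mul_ne_top hCt hCt
    obtain ⟨s, hsfin, hsapp⟩ := happrox (ε / 2 / (C + C * C))
      (ENNReal.div_pos (ENNReal.div_pos hε.ne' (by norm_num)).ne' hdent)
    have hIs := trans_simple P hα s hsfin
    rw [ENNReal.tendsto_nhds_zero] at hIs
    have hev1 := hIs (ε / 2 / (C * C))
      (ENNReal.div_pos (ENNReal.div_pos hε.ne' (by norm_num)).ne' hCCt)
    filter_upwards [hev1] with u hu
    have hms1 : Measurable fun p : Ω × Tsp l =>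
        ENNReal.ofReal (‖ψ (p.1, p.2 + u) - s (p.1, p.2 + u)‖ ^ α) :=
      ENNReal.measurable_ofReal.comp ((Real.continuous_rpow_const hα.le).measurable.comp
        (((hψm.sub s.measurable).comp
          (measurable_fst.prodMk (measurable_snd.add_const u))).norm))
    have hms2 : Measurable fun p : Ω × Tsp l =>
        ENNReal.ofReal (‖s (p.1, p.2 + u) - s p‖ ^ α) :=
      ENNReal.measurable_ofReal.comp ((Real.continuous_rpow_const hα.le).measurable.comp
        (((s.measurable.comp (measurable_fst.prodMk (measurable_snd.add_const u))).sub
          s.measurable).norm))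
    have hms3 : Measurable fun p : Ω × Tsp l => ENNReal.ofReal (‖s p - ψ p‖ ^ α) :=
      ENNReal.measurable_ofReal.comp ((Real.continuous_rpow_const hα.le).measurable.comp
        ((s.measurable.sub hψm).norm))
    have hpt : ∀ p : Ω × Tsp l, ENNReal.ofReal (‖ψ (p.1, p.2 + u) - ψ p‖ ^ α) ≤
        C * ENNReal.ofReal (‖ψ (p.1, p.2 + u) - s (p.1, p.2 + u)‖ ^ α) +
        (C * C * ENNReal.ofReal (‖s (p.1, p.2 + u) - s p‖ ^ α) +
         C * C * ENNReal.ofReal (‖s p - ψ p‖ ^ α)) := by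
      intro p
      have hdecomp : ψ (p.1, p.2 + u) - ψ p =
          (ψ (p.1, p.2 + u) - s (p.1, p.2 + u)) +
            ((s (p.1, p.2 + u) - s p) + (s p - ψ p)) := by abel
      calc ENNReal.ofReal (‖ψ (p.1, p.2 + u) - ψ p‖ ^ α)
          = ENNReal.ofReal (‖(ψ (p.1, p.2 + u) - s (p.1, p.2 + u)) +
              ((s (p.1, p.2 + u) - s p) + (s p - ψ p))‖ ^ α) := by rw [← hdecomp]
        _ ≤ C * (ENNReal.ofReal (‖ψ (p.1, p.2 + u) - s (p.1, p.2 + u)‖ ^ α) +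
              ENNReal.ofReal (‖(s (p.1, p.2 + u) - s p) + (s p - ψ p)‖ ^ α)) := qtri hα _ _
        _ ≤ C * (ENNReal.ofReal (‖ψ (p.1, p.2 + u) - s (p.1, p.2 + u)‖ ^ α) +
              C * (ENNReal.ofReal (‖s (p.1, p.2 + u) - s p‖ ^ α) +
                   ENNReal.ofReal (‖s p - ψ p‖ ^ α))) := by
            gcongr
            exact qtri hα _ _
        _ = C * ENNReal.ofReal (‖ψ (p.1, p.2 + u) - s (p.1, p.2 + u)‖ ^ α) +
            (C * C * ENNReal.ofReal (‖s (p.1, p.2 + u) - s p‖ ^ α) +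
             C * C * ENNReal.ofReal (‖s p - ψ p‖ ^ α)) := by ring
    have hint : I u ≤
        C * (∫⁻ p, ENNReal.ofReal (‖ψ (p.1, p.2 + u) - s (p.1, p.2 + u)‖ ^ α) ∂μprod) +
        (C * C * (∫⁻ p, ENNReal.ofReal (‖s (p.1, p.2 + u) - s p‖ ^ α) ∂μprod) +
         C * C * (∫⁻ p, ENNReal.ofReal (‖s p - ψ p‖ ^ α) ∂μprod)) := by
      calc I u ≤ ∫⁻ p, (C * ENNReal.ofReal (‖ψ (p.1, p.2 + u) - s (p.1, p.2 + u)‖ ^ α) +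
            (C * C * ENNReal.ofReal (‖s (p.1, p.2 + u) - s p‖ ^ α) +
             C * C * ENNReal.ofReal (‖s p - ψ p‖ ^ α))) ∂μprod := lintegral_mono hpt
        _ = _ := by
            rw [lintegral_add_left (hms1.const_mul C),
              lintegral_add_left (hms2.const_mul (C * C)),
              lintegral_const_mul C hms1, lintegral_const_mul (C * C) hms2,
              lintegral_const_mul (C * C) hms3]
    have h1 : (∫⁻ p, ENNReal.ofReal (‖ψ (p.1, p.2 + u) - s (p.1, p.2 + u)‖ ^ α) ∂μprod)
        = ∫⁻ p, ENNReal.ofReal (‖ψ p - s p‖ ^ α) ∂μprod := by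
      have hm : Measurable fun p : Ω × Tsp l => ENNReal.ofReal (‖ψ p - s p‖ ^ α) :=
        ENNReal.measurable_ofReal.comp ((Real.continuous_rpow_const hα.le).measurable.comp
          ((hψm.sub s.measurable).norm))
      exact hinv _ hm u
    have h3 : (∫⁻ p, ENNReal.ofReal (‖s p - ψ p‖ ^ α) ∂μprod)
        = ∫⁻ p, ENNReal.ofReal (‖ψ p - s p‖ ^ α) ∂μprod := by
      refine lintegral_congr fun p => ?_
      rw [norm_sub_rev]
    calc I u ≤ C * (∫⁻ p, ENNReal.ofReal (‖ψ p - s p‖ ^ α) ∂μprod) +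
          (C * C * (∫⁻ p, ENNReal.ofReal (‖s (p.1, p.2 + u) - s p‖ ^ α) ∂μprod) +
           C * C * (∫⁻ p, ENNReal.ofReal (‖ψ p - s p‖ ^ α) ∂μprod)) := by
          rw [h1, h3] at hint; exact hint
      _ = (C + C * C) * (∫⁻ p, ENNReal.ofReal (‖ψ p - s p‖ ^ α) ∂μprod) +
          C * C * (∫⁻ p, ENNReal.ofReal (‖s (p.1, p.2 + u) - s p‖ ^ α) ∂μprod) := by ring
      _ ≤ (C + C * C) * (ε / 2 / (C + C * C)) + C * C * (ε / 2 / (C * C)) := by gcongr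
      _ = ε / 2 + ε / 2 := by
          rw [ENNReal.mul_div_cancel hden0 hdent, ENNReal.mul_div_cancel hCC0 hCCt]
      _ = ε := ENNReal.add_halves ε
  -- comparison of G with I on the unit ball
  have hGI : ∀ u : Tsp l, ‖u‖ ≤ 1 → G u * volume (Metric.ball (0:Tsp l) 1) ≤ I u := by
    intro u hu
    have e1 : ∀ t : Tsp l, (∫⁻ ω, ENNReal.ofReal (‖ZT ω (t + u) - ZT ω t‖ ^ α) ∂P) = G u := by
      intro t
      rw [hG (t + u) t, add_sub_cancel_left]
    have hmq : Measurable fun q : Tsp l × Ω =>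
        ENNReal.ofReal (‖ZT q.2 (q.1 + u) - ZT q.2 q.1‖ ^ α) := by
      refine ENNReal.measurable_ofReal.comp
        ((Real.continuous_rpow_const hα.le).measurable.comp (Measurable.norm ?_))
      exact ((hZTm.comp (measurable_snd.prodMk (measurable_fst.add_const u))).sub
        (hZTm.comp (measurable_snd.prodMk measurable_fst)))
    calc G u * volume (Metric.ball (0:Tsp l) 1)
        = ∫⁻ t in Metric.ball (0:Tsp l) 1,
            (∫⁻ ω, ENNReal.ofReal (‖ZT ω (t + u) - ZT ω t‖ ^ α) ∂P) ∂volume := by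
          simp only [e1]; rw [setLIntegral_const]
      _ = ∫⁻ ω, (∫⁻ t in Metric.ball (0:Tsp l) 1,
            ENNReal.ofReal (‖ZT ω (t + u) - ZT ω t‖ ^ α) ∂volume) ∂P :=
          lintegral_lintegral_swap hmq.aemeasurable
      _ = ∫⁻ ω, (∫⁻ t in Metric.ball (0:Tsp l) 1,
            ENNReal.ofReal (‖ψ (ω, t + u) - ψ (ω, t)‖ ^ α) ∂volume) ∂P := by
          refine lintegral_congr fun ω => ?_
          refine setLIntegral_congr_fun measurableSet_ball
            (fun t ht => ?_)
          have h1 : ‖t‖ < 2 := by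
            rw [Metric.mem_ball, dist_zero_right] at ht; linarith
          have h2 : ‖t + u‖ < 2 := by
            rw [Metric.mem_ball, dist_zero_right] at ht
            calc ‖t + u‖ ≤ ‖t‖ + ‖u‖ := norm_add_le _ _
              _ < 2 := by linarith
          simp only [hψ]
          rw [if_pos h2, if_pos h1]
      _ ≤ ∫⁻ ω, (∫⁻ t, ENNReal.ofReal (‖ψ (ω, t + u) - ψ (ω, t)‖ ^ α) ∂volume) ∂P :=
          lintegral_mono fun ω => setLIntegral_le_lintegral _ _
      _ = I u :=
          (lintegral_prod (fun p : Ω × Tsp l => ENNReal.ofReal (‖ψ (p.1, p.2 + u) - ψ p‖ ^ α))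
            (hmg u).aemeasurable).symm
  -- G is continuous at 0
  have hGcont : Tendsto G (𝓝 0) (𝓝 0) := by
    rw [ENNReal.tendsto_nhds_zero]
    intro ε hε
    have hb0 : volume (Metric.ball (0:Tsp l) 1) ≠ 0 :=
      (Metric.measure_ball_pos volume (0 : Tsp l) one_pos).ne'
    have hbt : volume (Metric.ball (0:Tsp l) 1) ≠ ∞ := measure_ball_lt_top.ne
    have hev := (ENNReal.tendsto_nhds_zero.mp hI0) (ε * volume (Metric.ball (0:Tsp l) 1))
      (ENNReal.mul_pos hε.ne' hb0)
    have hev2 : ∀ᶠ u : Tsp l in 𝓝 0, ‖u‖ ≤ 1 := by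
      filter_upwards [Metric.closedBall_mem_nhds (0 : Tsp l) one_pos] with u hu
      simpa [dist_zero_right] using Metric.mem_closedBall.mp hu
    filter_upwards [hev, hev2] with u h1 h2
    exact (ENNReal.mul_le_mul_iff_left hb0 hbt).mp ((hGI u h2).trans h1)
  -- conclusion
  refine ⟨ZT, ⟨hZTstar, hId⟩, fun t => ?_⟩
  have heq : (fun s : Tsp l => ∫⁻ ω, ENNReal.ofReal (‖ZT ω s - ZT ω t‖ ^ α) ∂P)
      = fun s => G (s - t) := funext fun s => hG s t
  rw [heq]
  have hsub : Tendsto (fun s : Tsp l => s - t) (𝓝 t) (𝓝 0) := by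
    have hc : Continuous fun s : Tsp l => s - t := continuous_id.sub continuous_const
    simpa using hc.tendsto t
  exact hGcont.comp hsub
end
end

section
/- Let Z be a RF on a complete non-atomic probability space satisfying (★). Then for every Z̃ ∈ C[Z] one has P(S(Z̃) > 0) = 1, i.e., almost surely ∫_T ‖Z̃(t)‖^α λ(dt) > 0. -/
open MeasureTheory ProbabilityTheory Filter
open scoped ENNReal Topology
open scoped Pointwise

noncomputable section

set_option maxHeartbeats 2000000 in
/-- every `Z̃ ∈ C[Z]` satisfies `P(S(Z̃) > 0) = 1`. -/
theorem stmt1 {Ω : Type*} [MeasurableSpace Ω] (P : Measure Ω)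
    [IsProbabilityMeasure P] (hPc : P.IsComplete) [NullSingletonClass P]
    {l d : ℕ} (hl : 1 ≤ l) (hd : 1 ≤ d) (α : ℝ) (hα : 0 < α)
    (Z : Ω → RPath l d) (hZ : StarC P α Z) :
    ∀ ZT : Ω → RPath l d, MemC P P α Z ZT →
      P {ω | 0 < Sfun α (ZT ω)} = 1 := by
  intro ZT hZT
  classical
  obtain ⟨⟨hJm, _hInt, T₀, hT₀c, hT₀⟩, hId⟩ := hZT
  have hsec : ∀ t : Tsp l, Measurable fun ω => ZT ω t := fun t =>
    hJm.comp measurable_prodMk_right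
  have hIm : Measurable fun p : Ω × Tsp l => ENNReal.ofReal (‖ZT p.1 p.2‖ ^ α) :=
    ENNReal.measurable_ofReal.comp
      ((Real.continuous_rpow_const hα.le).measurable.comp hJm.norm)
  have hSm : Measurable fun ω => Sfun α (ZT ω) := by
    simpa [Sfun] using hIm.lintegral_prod_right'
  set SA : Set Ω := {ω | Sfun α (ZT ω) = 0} with hSAdef
  have hSAm : MeasurableSet SA := hSm (measurableSet_singleton 0)
  -- on SA, the path vanishes a.e.
  have hvan : ∀ ω ∈ SA, (volume {s : Tsp l | ZT ω s ≠ 0}) = 0 := by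
    intro ω hω
    have hm : Measurable fun s : Tsp l => ENNReal.ofReal (‖ZT ω s‖ ^ α) :=
      ENNReal.measurable_ofReal.comp
        ((Real.continuous_rpow_const hα.le).measurable.comp
          ((hJm.comp measurable_prodMk_left).norm))
    have h0 : (∫⁻ s, ENNReal.ofReal (‖ZT ω s‖ ^ α)) = 0 := hω
    have hae := (lintegral_eq_zero_iff hm).1 h0
    have : ∀ᵐ s : Tsp l, ZT ω s = 0 := by
      filter_upwards [hae] with s hs
      have h1 : ‖ZT ω s‖ ^ α ≤ 0 := ENNReal.ofReal_eq_zero.1 hs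
      have h2 : ‖ZT ω s‖ ^ α = 0 :=
        le_antisymm h1 (Real.rpow_nonneg (norm_nonneg _) α)
      have h3 : ‖ZT ω s‖ = 0 := by
        by_contra hne
        have hpos : (0:ℝ) < ‖ZT ω s‖ := lt_of_le_of_ne (norm_nonneg _) (Ne.symm hne)
        exact absurd h2 (ne_of_gt (Real.rpow_pos_of_pos hpos α))
      simpa using h3
    simpa [ae_iff] using this
  -- Fubini: for a.e. t, P(SA ∩ {ZT t ≠ 0}) = 0
  set E : Set (Ω × Tsp l) := {p | p.1 ∈ SA ∧ ZT p.1 p.2 ≠ 0} with hEdef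
  have hEm : MeasurableSet E := by
    refine (hSAm.preimage measurable_fst).inter ?_
    exact (hJm (measurableSet_singleton 0)).compl
  have hE0 : (P.prod volume) E = 0 := by
    rw [Measure.prod_apply hEm]
    have hz : ∀ ω, volume (Prod.mk ω ⁻¹' E) = 0 := by
      intro ω
      by_cases hω : ω ∈ SA
      · refine measure_mono_null ?_ (hvan ω hω)
        intro s hsm
        exact hsm.2
      · have : Prod.mk ω ⁻¹' E = ∅ := by
          ext s; simp [hEdef, hω]
        simp [this]
    simp [hz]
  have htae : ∀ᵐ t : Tsp l, P {ω | ω ∈ SA ∧ ZT ω t ≠ 0} = 0 := by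
    have hsymm := Measure.prod_apply_symm (μ := P) (ν := volume) hEm
    rw [hE0] at hsymm
    have hmeas : Measurable fun t : Tsp l => P ((fun ω => (ω, t)) ⁻¹' E) :=
      measurable_measure_prodMk_right hEm
    have := (lintegral_eq_zero_iff hmeas).1 hsymm.symm
    filter_upwards [this] with t ht
    rw [Pi.zero_apply] at ht
    exact ht
  -- countable dense set of good points
  obtain ⟨S, hSc, hSd⟩ := TopologicalSpace.exists_countable_dense (Tsp l)
  set N : Set (Tsp l) := {t | P {ω | ω ∈ SA ∧ ZT ω t ≠ 0} ≠ 0} with hNdef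
  have hN0 : volume N = 0 := by
    simpa [hNdef, ae_iff] using htae
  have hbad : volume (⋃ s ∈ S, (fun q : Tsp l => q + s) ⁻¹' N) = 0 := by
    refine (measure_biUnion_null_iff hSc).2 fun s _ => ?_
    rw [measure_preimage_add_right]
    exact hN0
  obtain ⟨q, hq⟩ : ∃ q : Tsp l, q ∉ ⋃ s ∈ S, (fun q : Tsp l => q + s) ⁻¹' N := by
    by_contra hcon
    push_neg at hcon
    have : volume (Set.univ : Set (Tsp l)) = 0 :=
      measure_mono_null (fun x _ => hcon x) hbad
    exact (IsOpen.measure_ne_zero volume isOpen_univ Set.univ_nonempty) this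
  set D : Set (Tsp l) := (fun s => q + s) '' S with hDdef
  have hDc : D.Countable := hSc.image _
  have hfsurj : Function.Surjective (fun s : Tsp l => q + s) := fun y => ⟨y - q, by simp⟩
  have hDd : Dense D := hfsurj.denseRange.dense_image (continuous_const.add continuous_id) hSd
  have hDG : ∀ x ∈ D, P {ω | ω ∈ SA ∧ ZT ω x ≠ 0} = 0 := by
    rintro x ⟨s, hs, rfl⟩
    by_contra hne
    exact hq (Set.mem_biUnion hs hne)
  -- main claim: for EVERY t
  have key : ∀ t : Tsp l, P {ω | ω ∈ SA ∧ ZT ω t ≠ 0} = 0 := by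
    intro t
    by_contra hpos0
    set U : Set (RPath l d) := {f | f t ≠ 0 ∧ ∀ x ∈ D, f x = 0} with hUdef
    have hUm : MeasurableSet U := by
      have h1 : MeasurableSet {f : RPath l d | f t ≠ 0} :=
        ((measurable_pi_apply t) (measurableSet_singleton 0)).compl
      have h2 : MeasurableSet (⋂ x ∈ D, {f : RPath l d | f x = 0}) :=
        MeasurableSet.biInter hDc fun x _ =>
          (measurable_pi_apply x) (measurableSet_singleton 0)
      have hUe : U = {f : RPath l d | f t ≠ 0} ∩ ⋂ x ∈ D, {f : RPath l d | f x = 0} := by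
        ext f; simp [hUdef]
      rw [hUe]; exact h1.inter h2
    set F : RPath l d → ℝ≥0∞ := U.indicator fun _ => ⊤ with hFdef
    have hF : Hom l d α F := by
      constructor
      · exact measurable_const.indicator hUm
      · intro c hc f
        have hmem : (fun s => c • f s) ∈ U ↔ f ∈ U := by
          simp [hUdef, smul_eq_zero, hc.ne']
        have hcα : ENNReal.ofReal (c ^ α) ≠ 0 := by
          simp [ENNReal.ofReal_eq_zero, not_le, Real.rpow_pos_of_pos hc]
        by_cases hf : f ∈ U
        · rw [hFdef]
          rw [Set.indicator_of_mem (hmem.2 hf), Set.indicator_of_mem hf,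
            ENNReal.mul_top hcα]
        · rw [hFdef]
          rw [Set.indicator_of_notMem (fun hcf => hf (hmem.1 hcf)),
            Set.indicator_of_notMem hf, mul_zero]
    have hShm : ∀ h : Tsp l, MeasurableSet {ω | shift h (ZT ω) ∈ U} := by
      intro h
      have heq : {ω | shift h (ZT ω) ∈ U}
          = {ω | ZT ω (t - h) ≠ 0} ∩ ⋂ x ∈ D, {ω | ZT ω (x - h) = 0} := by
        ext ω; simp [hUdef, shift]
      rw [heq]
      exact (((hsec (t - h)) (measurableSet_singleton 0)).compl).inter
        (MeasurableSet.biInter hDc fun x _ => (hsec (x - h)) (measurableSet_singleton 0))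
    have hval : ∀ h : Tsp l,
        (∫⁻ ω, F (shift h (ZT ω)) ∂P) = ⊤ * P {ω | shift h (ZT ω) ∈ U} := by
      intro h
      have hrw : (fun ω => F (shift h (ZT ω)))
          = Set.indicator {ω | shift h (ZT ω) ∈ U} fun _ => (⊤ : ℝ≥0∞) := by
        ext ω
        simp only [hFdef]
        by_cases hω : shift h (ZT ω) ∈ U
        · rw [Set.indicator_of_mem hω,
            Set.indicator_of_mem (show ω ∈ {ω | shift h (ZT ω) ∈ U} from hω)]
        · rw [Set.indicator_of_notMem hω,
            Set.indicator_of_notMem (show ω ∉ {ω | shift h (ZT ω) ∈ U} from hω)]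
      rw [hrw, lintegral_indicator_const (hShm h)]
    have hsh0 : ∀ f : RPath l d, shift (0 : Tsp l) f = f := by
      intro f; funext s; simp [shift]
    have hPU : P {ω | shift (0 : Tsp l) (ZT ω) ∈ U} ≠ 0 := by
      simp only [hsh0]
      intro h0
      have hunion : P (⋃ x ∈ D, {ω | ω ∈ SA ∧ ZT ω x ≠ 0}) = 0 :=
        (measure_biUnion_null_iff hDc).2 fun x hx => hDG x hx
      have hsub : {ω | ω ∈ SA ∧ ZT ω t ≠ 0}
          ⊆ {ω | ZT ω ∈ U} ∪ ⋃ x ∈ D, {ω | ω ∈ SA ∧ ZT ω x ≠ 0} := by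
        intro ω hω
        by_cases hU' : ZT ω ∈ U
        · exact Or.inl hU'
        · right
          have : ¬ (∀ x ∈ D, ZT ω x = 0) := fun hall => hU' ⟨hω.2, hall⟩
          push_neg at this
          obtain ⟨x, hxD, hxne⟩ := this
          exact Set.mem_biUnion hxD ⟨hω.1, hxne⟩
      exact hpos0 (measure_mono_null hsub (le_antisymm
        (le_trans (measure_union_le _ _) (by rw [h0, hunion, add_zero])) zero_le))
    have hall : ∀ h : Tsp l, P {ω | shift h (ZT ω) ∈ U} ≠ 0 := by
      intro h hzero
      have e1 := hId F hF 0
      have e2 := hId F hF h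
      rw [hval 0] at e1
      rw [hval h] at e2
      have : (⊤ : ℝ≥0∞) * P {ω | shift (0 : Tsp l) (ZT ω) ∈ U}
          = ⊤ * P {ω | shift h (ZT ω) ∈ U} := e1.symm.trans e2
      rw [hzero, mul_zero, ENNReal.top_mul hPU] at this
      exact ENNReal.top_ne_zero this
    -- Tonelli over shifts
    set W : Set (Ω × Tsp l) :=
      {p | ZT p.1 (t - p.2) ≠ 0 ∧ ∀ x ∈ D, ZT p.1 (x - p.2) = 0} with hWdef
    have hWm : MeasurableSet W := by
      have hm1 : Measurable fun p : Ω × Tsp l => ZT p.1 (t - p.2) :=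
        hJm.comp (measurable_fst.prodMk (measurable_const.sub measurable_snd))
      have hset : W = {p : Ω × Tsp l | ZT p.1 (t - p.2) ≠ 0}
          ∩ ⋂ x ∈ D, {p : Ω × Tsp l | ZT p.1 (x - p.2) = 0} := by
        ext p; simp [hWdef]
      rw [hset]
      refine ((hm1 (measurableSet_singleton 0)).compl).inter ?_
      refine MeasurableSet.biInter hDc fun x _ => ?_
      exact (hJm.comp (measurable_fst.prodMk
        (measurable_const.sub measurable_snd))) (measurableSet_singleton 0)
    have hWsec : ∀ h : Tsp l, ((fun ω => (ω, h)) ⁻¹' W) = {ω | shift h (ZT ω) ∈ U} := by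
      intro h; ext ω; simp [hWdef, hUdef, shift]
    have hWpos : (P.prod volume) W ≠ 0 := by
      rw [Measure.prod_apply_symm hWm]
      intro h0
      have hmeas : Measurable fun h : Tsp l => P ((fun ω => (ω, h)) ⁻¹' W) :=
        measurable_measure_prodMk_right hWm
      have hae := (lintegral_eq_zero_iff hmeas).1 h0
      have huniv : {h : Tsp l | ¬ P ((fun ω => (ω, h)) ⁻¹' W) = 0} = Set.univ := by
        ext h
        simp only [Set.mem_setOf_eq, Set.mem_univ, iff_true]
        rw [hWsec h]
        exact hall h
      have : volume {h : Tsp l | ¬ P ((fun ω => (ω, h)) ⁻¹' W) = 0} = 0 := by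
        simpa [ae_iff, Filter.EventuallyEq] using hae
      rw [huniv] at this
      exact (IsOpen.measure_ne_zero volume isOpen_univ Set.univ_nonempty) this
    obtain ⟨ω, hω⟩ : ∃ ω, volume (Prod.mk ω ⁻¹' W) ≠ 0 := by
      by_contra hc
      push_neg at hc
      have : (P.prod volume) W = 0 := by
        rw [Measure.prod_apply hWm]
        simp [hc]
      exact hWpos this
    set H : Set (Tsp l) := Prod.mk ω ⁻¹' W with hHdef
    have hHm : MeasurableSet H := measurable_prodMk_left hWm
    have hHpos : 0 < volume H := pos_iff_ne_zero.2 hω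
    have hnhds : H - H ∈ 𝓝 (0 : Tsp l) :=
      Measure.sub_mem_nhds_zero_of_addHaar_pos volume H hHm hHpos
    have hpre : (fun x : Tsp l => x - t) ⁻¹' (H - H) ∈ 𝓝 t := by
      have hcont : ContinuousAt (fun x : Tsp l => x - t) t :=
        (continuous_id.sub continuous_const).continuousAt
      have h0t : (fun x : Tsp l => x - t) t = 0 := by simp
      exact hcont (by rw [h0t]; exact hnhds)
    obtain ⟨x, hxp, hxD⟩ :
        ((fun x : Tsp l => x - t) ⁻¹' (H - H) ∩ D).Nonempty :=
      mem_closure_iff_nhds.1 (hDd t) _ hpre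
    obtain ⟨a, ha, b, hb, hab⟩ : ∃ a ∈ H, ∃ b ∈ H, a - b = x - t := Set.mem_sub.1 hxp
    have h1 : ZT ω (t - b) ≠ 0 := (hb : (ω, b) ∈ W).1
    have h2 : ZT ω (x - a) = 0 := (ha : (ω, a) ∈ W).2 x hxD
    have h3 : t - b = x - a := by
      rw [sub_eq_sub_iff_add_eq_add]
      rw [sub_eq_sub_iff_add_eq_add] at hab
      rw [add_comm t a]
      exact hab
    exact h1 (h3 ▸ h2)
  -- conclude
  have hsub2 : {ω | ∃ t ∈ T₀, 0 < ‖ZT ω t‖}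
      ⊆ {ω | 0 < Sfun α (ZT ω)} ∪ ⋃ t ∈ T₀, {ω | ω ∈ SA ∧ ZT ω t ≠ 0} := by
    intro ω hω
    by_cases hS : 0 < Sfun α (ZT ω)
    · exact Or.inl hS
    · right
      have hSA : ω ∈ SA := by
        have : Sfun α (ZT ω) = 0 := by
          simpa [pos_iff_ne_zero] using hS
        exact this
      obtain ⟨t, htT, htn⟩ := hω
      refine Set.mem_biUnion htT ⟨hSA, ?_⟩
      intro h0
      rw [h0] at htn
      simp at htn
  have hU0 : P (⋃ t ∈ T₀, {ω | ω ∈ SA ∧ ZT ω t ≠ 0}) = 0 :=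
    (measure_biUnion_null_iff hT₀c).2 fun t _ => key t
  have h1 : (1 : ℝ≥0∞) ≤ P {ω | 0 < Sfun α (ZT ω)} := by
    calc (1 : ℝ≥0∞) = P {ω | ∃ t ∈ T₀, 0 < ‖ZT ω t‖} := hT₀.symm
      _ ≤ P ({ω | 0 < Sfun α (ZT ω)} ∪ ⋃ t ∈ T₀, {ω | ω ∈ SA ∧ ZT ω t ≠ 0}) :=
          measure_mono hsub2
      _ ≤ P {ω | 0 < Sfun α (ZT ω)} + P (⋃ t ∈ T₀, {ω | ω ∈ SA ∧ ZT ω t ≠ 0}) :=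
          measure_union_le _ _
      _ = P {ω | 0 < Sfun α (ZT ω)} := by rw [hU0, add_zero]
  exact le_antisymm prob_le_one h1
end
end

section
/- Let Z be a RF on a complete non-atomic probability space satisfying (★), let Z̃ ∈ C[Z], and let Θ̃ be the associated local RF under the tilted measure P̂. Then P̂(S(Θ̃) > 0) = 1, i.e., E[‖Z̃(0)‖^α · 1{∫_T ‖Θ̃(t)‖^α λ(dt) = 0}] = 0. -/
open MeasureTheory ProbabilityTheory Filter
open scoped ENNReal Topology

noncomputable section

open Classical in
/-- auxiliary functional -/
def Ffun {l d : ℕ} (α : ℝ) (T₀ : Set (Tsp l)) (u : Tsp l) (f : RPath l d) : ℝ≥0∞ :=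
  ENNReal.ofReal (‖f 0‖ ^ α) * (if ∀ t ∈ T₀, f (t + u) = 0 then 1 else 0)

lemma hom_Ffun {l d : ℕ} {α : ℝ} (hα : 0 < α) {T₀ : Set (Tsp l)} (hT₀c : T₀.Countable)
    (u : Tsp l) : Hom l d α (Ffun α T₀ u) := by
  classical
  constructor
  · have hset : MeasurableSet {f : RPath l d | ∀ t ∈ T₀, f (t + u) = 0} := by
      have : {f : RPath l d | ∀ t ∈ T₀, f (t + u) = 0}
          = ⋂ t ∈ T₀, (fun f : RPath l d => f (t + u)) ⁻¹' {0} := by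
        ext f; simp
      rw [this]
      exact MeasurableSet.biInter hT₀c fun t _ =>
        (measurable_pi_apply _) (measurableSet_singleton 0)
    exact (((measurable_pi_apply (0 : Tsp l)).norm.pow measurable_const).ennreal_ofReal).mul
      (Measurable.ite hset measurable_const measurable_const)
  · intro c hc f
    have h1 : ‖c • f 0‖ ^ α = c ^ α * ‖f 0‖ ^ α := by
      rw [norm_smul, Real.norm_eq_abs, abs_of_pos hc, Real.mul_rpow hc.le (norm_nonneg _)]
    have h2 : (∀ t ∈ T₀, c • f (t + u) = 0) ↔ (∀ t ∈ T₀, f (t + u) = 0) := by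
      constructor <;> intro h t ht
      · rcases smul_eq_zero.mp (h t ht) with h' | h'
        · exact absurd h' hc.ne'
        · exact h'
      · rw [h t ht, smul_zero]
    simp only [Ffun, h1, ENNReal.ofReal_mul (Real.rpow_nonneg hc.le α), h2, mul_assoc]


/-- the local RF `Θ̃` satisfies `P̂(S(Θ̃) > 0) = 1`, i.e.
`E[‖Z̃(0)‖^α 1{S(Θ̃) = 0}] = 0`. -/
theorem stmt2 {Ω : Type*} [MeasurableSpace Ω] (P : Measure Ω)
    [IsProbabilityMeasure P] (hPc : P.IsComplete) [NullSingletonClass P]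
    {l d : ℕ} (hl : 1 ≤ l) (hd : 1 ≤ d) (α : ℝ) (hα : 0 < α)
    (Z : Ω → RPath l d) (hZ : StarC P α Z)
    (ZT : Ω → RPath l d) (hZT : MemC P P α Z ZT) :
    (∫⁻ ω, ENNReal.ofReal (‖ZT ω 0‖ ^ α) *
        (if Sfun α (localRF ZT ω) = 0 then 1 else 0) ∂P) = 0 := by
  
  classical
  obtain ⟨hZTstar, hIdent⟩ := hZT
  obtain ⟨hZTm, hZT1, T₀, hT₀c, hT₀⟩ := hZTstar
  have hsec : ∀ t : Tsp l, Measurable fun ω => ZT ω t := fun t =>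
    hZTm.comp (measurable_id.prodMk measurable_const)
  have hsecω : ∀ ω, Measurable fun s => ZT ω s := fun ω =>
    hZTm.comp (measurable_const.prodMk measurable_id)
  -- measurability of ω ↦ Sfun α (ZT ω)
  have hSmeas : Measurable fun ω => Sfun α (ZT ω) := by
    have h : Measurable fun p : Ω × Tsp l => ENNReal.ofReal (‖ZT p.1 p.2‖ ^ α) :=
      (hZTm.norm.pow measurable_const).ennreal_ofReal
    exact h.lintegral_prod_right'
  have hw : Measurable fun ω => ENNReal.ofReal (‖ZT ω 0‖ ^ α) :=
    ((hsec 0).norm.pow measurable_const).ennreal_ofReal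
  have hiA : Measurable fun ω => (if Sfun α (ZT ω) = 0 then (1 : ℝ≥0∞) else 0) :=
    Measurable.ite (hSmeas (measurableSet_singleton 0)) measurable_const measurable_const
  -- Step 0 : rewrite the integrand
  have step0 : (∫⁻ ω, ENNReal.ofReal (‖ZT ω 0‖ ^ α) *
        (if Sfun α (localRF ZT ω) = 0 then 1 else 0) ∂P)
      = ∫⁻ ω, ENNReal.ofReal (‖ZT ω 0‖ ^ α) *
        (if Sfun α (ZT ω) = 0 then 1 else 0) ∂P := by
    refine lintegral_congr fun ω => ?_
    by_cases h0 : ‖ZT ω 0‖ = 0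
    · rw [h0, Real.zero_rpow hα.ne', ENNReal.ofReal_zero, zero_mul, zero_mul]
    · have hc : 0 < ‖ZT ω 0‖⁻¹ :=
        inv_pos.mpr (lt_of_le_of_ne (norm_nonneg _) (Ne.symm h0))
      have hS : Sfun α (localRF ZT ω)
          = ENNReal.ofReal (‖ZT ω 0‖⁻¹ ^ α) * Sfun α (ZT ω) := by
        unfold Sfun localRF
        rw [← lintegral_const_mul' _ _ ENNReal.ofReal_ne_top]
        refine lintegral_congr fun t => ?_
        rw [if_neg h0, norm_smul, Real.norm_eq_abs, abs_of_pos hc,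
          Real.mul_rpow hc.le (norm_nonneg _),
          ENNReal.ofReal_mul (Real.rpow_nonneg hc.le _)]
      have hne : ENNReal.ofReal (‖ZT ω 0‖⁻¹ ^ α) ≠ 0 := by
        simp [ENNReal.ofReal_eq_zero, not_le.mpr (Real.rpow_pos_of_pos hc α)]
      have hiff : Sfun α (localRF ZT ω) = 0 ↔ Sfun α (ZT ω) = 0 := by
        rw [hS, mul_eq_zero]; simp [hne]
      rw [if_congr hiff rfl rfl]
  rw [step0]
  -- the set where ZT vanishes on T₀ is null
  have hN : P {ω | ∀ t ∈ T₀, ZT ω t = 0} = 0 := by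
    have hGmeas : MeasurableSet {ω | ∃ t ∈ T₀, 0 < ‖ZT ω t‖} := by
      have : {ω | ∃ t ∈ T₀, 0 < ‖ZT ω t‖}
          = ⋃ t ∈ T₀, (fun ω => ZT ω t) ⁻¹' ({0}ᶜ) := by
        ext ω; simp [norm_pos_iff]
      rw [this]
      exact MeasurableSet.biUnion hT₀c fun t _ =>
        (hsec t) (measurableSet_singleton 0).compl
    have h1 : P ({ω | ∃ t ∈ T₀, 0 < ‖ZT ω t‖}ᶜ) = 0 := by
      rw [measure_compl hGmeas (measure_ne_top _ _), hT₀]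
      simp
    refine measure_mono_null ?_ h1
    intro ω hω
    simp only [Set.mem_compl_iff, Set.mem_setOf_eq]
    rintro ⟨t, ht, hpos⟩
    rw [hω t ht] at hpos
    simp at hpos
  -- key identity : for every u the weighted mass of {ZT ≡ 0 on T₀ + u} is 0
  have key : ∀ u : Tsp l, (∫⁻ ω, ENNReal.ofReal (‖ZT ω 0‖ ^ α) *
      (if ∀ t ∈ T₀, ZT ω (t + u) = 0 then 1 else 0) ∂P) = 0 := by
    intro u
    have hom := hom_Ffun (d := d) hα hT₀c u
    have e0 := hIdent (Ffun α T₀ u) hom 0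
    have eu := hIdent (Ffun α T₀ u) hom u
    have h1 : (∫⁻ ω, Ffun α T₀ u (shift 0 (ZT ω)) ∂P)
        = ∫⁻ ω, ENNReal.ofReal (‖ZT ω 0‖ ^ α) *
          (if ∀ t ∈ T₀, ZT ω (t + u) = 0 then 1 else 0) ∂P := by
      refine lintegral_congr fun ω => ?_
      simp [Ffun, shift, sub_zero]
    have hae : ∀ᵐ ω ∂P, ¬ (∀ t ∈ T₀, ZT ω t = 0) := by
      rw [ae_iff]
      simpa [not_not] using hN
    have h2 : (∫⁻ ω, Ffun α T₀ u (shift u (ZT ω)) ∂P) = 0 := by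
      have : (∫⁻ ω, Ffun α T₀ u (shift u (ZT ω)) ∂P) = ∫⁻ _, (0 : ℝ≥0∞) ∂P := by
        refine lintegral_congr_ae ?_
        filter_upwards [hae] with ω hω
        simp only [Ffun, shift, add_sub_cancel_right]
        rw [if_neg hω, mul_zero]
      rw [this, lintegral_zero]
    rw [← h1, ← e0, eu, h2]
  -- keyA : inserting the indicator of "exists a nonzero point on T₀ + u" is harmless
  have keyA : ∀ u : Tsp l,
      (∫⁻ ω, ENNReal.ofReal (‖ZT ω 0‖ ^ α) * (if Sfun α (ZT ω) = 0 then 1 else 0) *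
        (if ∀ t ∈ T₀, ZT ω (t + u) = 0 then 0 else 1) ∂P)
      = ∫⁻ ω, ENNReal.ofReal (‖ZT ω 0‖ ^ α) * (if Sfun α (ZT ω) = 0 then 1 else 0) ∂P := by
    intro u
    have hχ : Measurable fun ω => (if ∀ t ∈ T₀, ZT ω (t + u) = 0 then (1 : ℝ≥0∞) else 0) := by
      have hset : MeasurableSet {ω | ∀ t ∈ T₀, ZT ω (t + u) = 0} := by
        have : {ω | ∀ t ∈ T₀, ZT ω (t + u) = 0}
            = ⋂ t ∈ T₀, (fun ω => ZT ω (t + u)) ⁻¹' {0} := by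
          ext ω; simp
        rw [this]
        exact MeasurableSet.biInter hT₀c fun t _ => (hsec (t + u)) (measurableSet_singleton 0)
      exact Measurable.ite hset measurable_const measurable_const
    have hsplit : (fun ω => ENNReal.ofReal (‖ZT ω 0‖ ^ α) * (if Sfun α (ZT ω) = 0 then 1 else 0))
        = fun ω => ENNReal.ofReal (‖ZT ω 0‖ ^ α) * (if Sfun α (ZT ω) = 0 then 1 else 0) *
            (if ∀ t ∈ T₀, ZT ω (t + u) = 0 then 0 else 1)
          + ENNReal.ofReal (‖ZT ω 0‖ ^ α) * (if Sfun α (ZT ω) = 0 then 1 else 0) *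
            (if ∀ t ∈ T₀, ZT ω (t + u) = 0 then 1 else 0) := by
      funext ω
      by_cases h : ∀ t ∈ T₀, ZT ω (t + u) = 0
      · rw [if_pos h, if_pos h, mul_zero, mul_one, zero_add]
      · rw [if_neg h, if_neg h, mul_one, mul_zero, add_zero]
    have hzero : (∫⁻ ω, ENNReal.ofReal (‖ZT ω 0‖ ^ α) * (if Sfun α (ZT ω) = 0 then 1 else 0) *
        (if ∀ t ∈ T₀, ZT ω (t + u) = 0 then 1 else 0) ∂P) = 0 := by
      refine le_antisymm ?_ zero_le
      calc (∫⁻ ω, ENNReal.ofReal (‖ZT ω 0‖ ^ α) * (if Sfun α (ZT ω) = 0 then 1 else 0) *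
            (if ∀ t ∈ T₀, ZT ω (t + u) = 0 then 1 else 0) ∂P)
          ≤ ∫⁻ ω, ENNReal.ofReal (‖ZT ω 0‖ ^ α) *
            (if ∀ t ∈ T₀, ZT ω (t + u) = 0 then 1 else 0) ∂P := by
            refine lintegral_mono fun ω => ?_
            refine mul_le_mul_left ?_ _
            calc ENNReal.ofReal (‖ZT ω 0‖ ^ α) * (if Sfun α (ZT ω) = 0 then 1 else 0)
                ≤ ENNReal.ofReal (‖ZT ω 0‖ ^ α) * 1 := by
                  refine mul_le_mul_right ?_ _
                  split <;> simp
              _ = ENNReal.ofReal (‖ZT ω 0‖ ^ α) := mul_one _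
        _ = 0 := key u
    conv_rhs => rw [hsplit]
    rw [lintegral_add_right (g := fun ω => ENNReal.ofReal (‖ZT ω 0‖ ^ α) * (if Sfun α (ZT ω) = 0 then 1 else 0) *
      (if ∀ t ∈ T₀, ZT ω (t + u) = 0 then 1 else 0)) _ ((hw.mul hiA).mul hχ), hzero, add_zero]
  -- Tonelli over the unit ball
  set B := Metric.ball (0 : Tsp l) 1 with hB
  have hgmeas : Measurable fun p : Tsp l × Ω =>
      ENNReal.ofReal (‖ZT p.2 0‖ ^ α) * (if Sfun α (ZT p.2) = 0 then 1 else 0) *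
        (if ∀ t ∈ T₀, ZT p.2 (t + p.1) = 0 then 0 else 1) := by
    refine ((hw.comp measurable_snd).mul (hiA.comp measurable_snd)).mul ?_
    have hset : MeasurableSet {p : Tsp l × Ω | ∀ t ∈ T₀, ZT p.2 (t + p.1) = 0} := by
      have : {p : Tsp l × Ω | ∀ t ∈ T₀, ZT p.2 (t + p.1) = 0}
          = ⋂ t ∈ T₀, (fun p : Tsp l × Ω => ZT p.2 (t + p.1)) ⁻¹' {0} := by
        ext p; simp
      rw [this]
      refine MeasurableSet.biInter hT₀c fun t _ => ?_
      exact (hZTm.comp (measurable_snd.prodMk (measurable_fst.const_add t)))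
        (measurableSet_singleton 0)
    exact Measurable.ite hset measurable_const measurable_const
  have swap := lintegral_lintegral_swap (μ := volume.restrict B) (ν := P)
    (f := fun u ω => ENNReal.ofReal (‖ZT ω 0‖ ^ α) * (if Sfun α (ZT ω) = 0 then 1 else 0) *
      (if ∀ t ∈ T₀, ZT ω (t + u) = 0 then 0 else 1)) hgmeas.aemeasurable
  -- LHS of swap
  have hLHS : (∫⁻ u in B, (∫⁻ ω, ENNReal.ofReal (‖ZT ω 0‖ ^ α) *
        (if Sfun α (ZT ω) = 0 then 1 else 0) *
        (if ∀ t ∈ T₀, ZT ω (t + u) = 0 then 0 else 1) ∂P)) =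
      (∫⁻ ω, ENNReal.ofReal (‖ZT ω 0‖ ^ α) * (if Sfun α (ZT ω) = 0 then 1 else 0) ∂P)
        * volume B := by
    rw [lintegral_congr fun u => keyA u, lintegral_const, Measure.restrict_apply_univ]
  -- RHS of swap is zero
  have hRHS : (∫⁻ ω, (∫⁻ u in B, ENNReal.ofReal (‖ZT ω 0‖ ^ α) *
        (if Sfun α (ZT ω) = 0 then 1 else 0) *
        (if ∀ t ∈ T₀, ZT ω (t + u) = 0 then 0 else 1)) ∂P) = 0 := by
    have : ∀ ω, (∫⁻ u in B, ENNReal.ofReal (‖ZT ω 0‖ ^ α) *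
        (if Sfun α (ZT ω) = 0 then 1 else 0) *
        (if ∀ t ∈ T₀, ZT ω (t + u) = 0 then 0 else 1)) = 0 := by
      intro ω
      by_cases hA : Sfun α (ZT ω) = 0
      · -- the paths vanishes a.e., hence the inner integral vanishes
        have hmeasf : Measurable fun s : Tsp l => ENNReal.ofReal (‖ZT ω s‖ ^ α) :=
          ((hsecω ω).norm.pow measurable_const).ennreal_ofReal
        have haes : ∀ᵐ s : Tsp l, ZT ω s = 0 := by
          have h0 := (lintegral_eq_zero_iff hmeasf).mp hA
          filter_upwards [h0] with s hs
          by_contra hne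
          have hpos : 0 < ‖ZT ω s‖ := norm_pos_iff.mpr hne
          have : (0 : ℝ) < ‖ZT ω s‖ ^ α := Real.rpow_pos_of_pos hpos α
          simp only [Pi.zero_apply, ENNReal.ofReal_eq_zero] at hs
          exact absurd hs (not_le.mpr this)
        have hVnull : volume {s : Tsp l | ZT ω s ≠ 0} = 0 := by
          simpa [ae_iff] using haes
        have hUnull : volume {v : Tsp l | ¬ ∀ t ∈ T₀, ZT ω (t + v) = 0} = 0 := by
          have hUeq : {v : Tsp l | ¬ ∀ t ∈ T₀, ZT ω (t + v) = 0}
              = ⋃ t ∈ T₀, (fun v : Tsp l => t + v) ⁻¹' {s | ZT ω s ≠ 0} := by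
            ext v; simp [not_forall]
          rw [hUeq]
          rw [measure_biUnion_null_iff hT₀c]
          intro t _
          rw [measure_preimage_add]
          exact hVnull
        have hUmeas : MeasurableSet {v : Tsp l | ¬ ∀ t ∈ T₀, ZT ω (t + v) = 0} := by
          have hUeq : {v : Tsp l | ¬ ∀ t ∈ T₀, ZT ω (t + v) = 0}
              = ⋃ t ∈ T₀, (fun v : Tsp l => t + v) ⁻¹' {s | ZT ω s ≠ 0} := by
            ext v; simp [not_forall]
          rw [hUeq]
          refine MeasurableSet.biUnion hT₀c fun t _ => ?_
          exact (measurable_const_add t) ((hsecω ω) (measurableSet_singleton 0).compl)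
        refine le_antisymm ?_ zero_le
        calc (∫⁻ u in B, ENNReal.ofReal (‖ZT ω 0‖ ^ α) *
              (if Sfun α (ZT ω) = 0 then 1 else 0) *
              (if ∀ t ∈ T₀, ZT ω (t + u) = 0 then 0 else 1))
            ≤ ∫⁻ u in B, (⊤ : ℝ≥0∞) *
              (if ∀ t ∈ T₀, ZT ω (t + u) = 0 then 0 else 1) := by
              refine lintegral_mono fun u => mul_le_mul_left le_top _
          _ ≤ ∫⁻ u, (⊤ : ℝ≥0∞) * (if ∀ t ∈ T₀, ZT ω (t + u) = 0 then 0 else 1) :=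
              lintegral_mono' Measure.restrict_le_self le_rfl
          _ = 0 := by
              have : ∀ᵐ u : Tsp l, (⊤ : ℝ≥0∞) *
                  (if ∀ t ∈ T₀, ZT ω (t + u) = 0 then 0 else 1) = 0 := by
                have : ∀ᵐ u : Tsp l, ∀ t ∈ T₀, ZT ω (t + u) = 0 := by
                  rw [ae_iff]; exact hUnull
                filter_upwards [this] with u hu
                rw [if_pos hu, mul_zero]
              rw [lintegral_congr_ae this, lintegral_zero]
      · refine le_antisymm ?_ zero_le
        calc (∫⁻ u in B, ENNReal.ofReal (‖ZT ω 0‖ ^ α) *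
              (if Sfun α (ZT ω) = 0 then 1 else 0) *
              (if ∀ t ∈ T₀, ZT ω (t + u) = 0 then 0 else 1))
            ≤ ∫⁻ _ in B, (0 : ℝ≥0∞) := by
              refine lintegral_mono fun u => ?_
              rw [if_neg hA, mul_zero, zero_mul]
          _ = 0 := lintegral_zero
    rw [lintegral_congr this, lintegral_zero]
  have hfinal : (∫⁻ ω, ENNReal.ofReal (‖ZT ω 0‖ ^ α) *
      (if Sfun α (ZT ω) = 0 then 1 else 0) ∂P) * volume B = 0 := by
    rw [← hLHS, swap, hRHS]
  have hBpos : volume B ≠ 0 := (Metric.measure_ball_pos volume (0 : Tsp l) one_pos).ne'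
  rcases mul_eq_zero.mp hfinal with h | h
  · exact h
  · exact absurd h hBpos
end
end

section
/- Let Z be a RF on a complete non-atomic probability space satisfying (★), let Z̃ ∈ C[Z], and let Θ̃ be the associated local RF under the tilted measure P̂. Then, with respect to the product measure P̂ ⊗ μ_α on Ω × [1, ∞), almost every (ω, r) satisfies λ({t ∈ T : r ‖Θ̃(t)(ω)‖ > 1}) > 0; that is, the tail RF Ỹ(t) = R Θ̃(t), with R α-Pareto independent of Θ̃, satisfies P(B(Ỹ) > 0) = 1 where B(Y) = ∫_T 1{‖Y(t)‖ > 1} λ(dt). -/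
open MeasureTheory ProbabilityTheory Filter
open scoped ENNReal Topology

noncomputable section

open Pointwise in
lemma kernelA {l : ℕ} {ι : Type} [Countable ι] (φ : Tsp l → ℝ) (hφ : Measurable φ)
    {c : ℝ} (hc0 : 0 ≤ c) (hc1 : c < 1)
    (s : ι → Tsp l) (hsym : ∀ n, ∃ m, s m = -(s n)) (hdense : DenseRange s) :
    volume {t : Tsp l | 0 < φ t ∧ ∀ n, φ (s n + t) ≤ c * φ t} = 0 := by
  set A := {t : Tsp l | 0 < φ t ∧ ∀ n, φ (s n + t) ≤ c * φ t} with hA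
  have hAm : MeasurableSet A := by
    have : A = {t | 0 < φ t} ∩ ⋂ n, {t | φ (s n + t) ≤ c * φ t} := by
      ext t; simp [hA, Set.mem_iInter]
    rw [this]
    exact (measurableSet_lt measurable_const hφ).inter
      (MeasurableSet.iInter fun n => measurableSet_le
        (hφ.comp (measurable_const.add measurable_id)) (hφ.const_mul c))
  by_contra hne
  have hpos : 0 < volume A := pos_iff_ne_zero.mpr hne
  have hst := MeasureTheory.Measure.sub_mem_nhds_zero_of_addHaar_pos volume A hAm hpos
  obtain ⟨U, hUsub, hUopen, hU0⟩ := mem_nhds_iff.mp hst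
  obtain ⟨n, hn⟩ := hdense.exists_mem_open hUopen ⟨0, hU0⟩
  have hnAA : s n ∈ A - A := hUsub hn
  rw [Set.mem_sub] at hnAA
  obtain ⟨x', hx', y, hy, hdiff⟩ := hnAA
  obtain ⟨m, hm⟩ := hsym n
  have hx'eq : s n + y = x' := by rw [← hdiff]; abel
  have h1 : φ x' ≤ c * φ y := by have := hy.2 n; rwa [hx'eq] at this
  have h2 : φ y ≤ c * φ x' := by
    have := hx'.2 m
    rw [hm] at this
    rw [← hx'eq, neg_add_cancel_left] at this
    rwa [hx'eq] at this
  nlinarith [hy.1, hx'.1]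

lemma keyzero {Ω : Type*} [MeasurableSpace Ω] (P : Measure Ω) [IsProbabilityMeasure P]
    {l d : ℕ} {α : ℝ} (hα : 0 < α) (Z ZT : Ω → RPath l d)
    (hmeas : Measurable fun p : Ω × Tsp l => ZT p.1 p.2)
    (hid : ∀ F : RPath l d → ℝ≥0∞, Hom l d α F → ∀ h : Tsp l,
      (∫⁻ ω, F (Z ω) ∂P) = ∫⁻ ω, F (shift h (ZT ω)) ∂P)
    {c : ℝ} (hc0 : 0 < c) (hc1 : c < 1) :
    ∫⁻ ω in {ω | volume {t : Tsp l | c * ‖ZT ω 0‖ < ‖ZT ω t‖} = 0},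
      ENNReal.ofReal (‖ZT ω 0‖ ^ α) ∂P = 0 := by
  classical
  have hZT0 : Measurable fun ω => ZT ω 0 := hmeas.comp (measurable_id.prodMk measurable_const)
  have hZTfull : Measurable ZT :=
    measurable_pi_lambda _ fun t => hmeas.comp (measurable_id.prodMk measurable_const)
  have hρm : Measurable fun ω => ENNReal.ofReal (‖ZT ω 0‖ ^ α) :=
    ((Real.continuous_rpow_const hα.le).measurable.comp hZT0.norm).ennreal_ofReal
  set ρ : Ω → ℝ≥0∞ := fun ω => ENNReal.ofReal (‖ZT ω 0‖ ^ α) with hρ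
  set Bad : Ω → Set (Tsp l) := fun ω => {t | c * ‖ZT ω 0‖ < ‖ZT ω t‖} with hBad
  set E : Set Ω := {ω | volume (Bad ω) = 0} with hE
  have hSm : MeasurableSet {p : Ω × Tsp l | c * ‖ZT p.1 0‖ < ‖ZT p.1 p.2‖} :=
    measurableSet_lt
      (((hmeas.comp (measurable_fst.prodMk measurable_const)).norm).const_mul c) hmeas.norm
  have hBadm : ∀ ω, MeasurableSet (Bad ω) := fun ω => measurable_prodMk_left hSm
  have hVm : Measurable fun ω => volume (Bad ω) := measurable_measure_prodMk_left hSm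
  have hEm : MeasurableSet E := hVm (measurableSet_singleton 0)
  -- dense sequence and symmetric dense grids
  set u : ℕ → Tsp l := TopologicalSpace.denseSeq (Tsp l) with hu
  have hud : DenseRange u := TopologicalSpace.denseRange_denseSeq (Tsp l)
  set g : Tsp l → ℕ × Bool → Tsp l :=
    fun w q => if q.2 then u q.1 + w else -(u q.1 + w) with hg
  have hgm : ∀ q, Measurable fun w => g w q := by
    rintro ⟨n, b⟩; cases b
    · exact (measurable_const.add measurable_id :
        Measurable fun w : Tsp l => u n + w).neg
    · exact (measurable_const.add measurable_id :
        Measurable fun w : Tsp l => u n + w)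
  have hgsym : ∀ w q, ∃ q', g w q' = -(g w q) := by
    rintro w ⟨n, b⟩
    cases b
    · exact ⟨(n, true), by simp [hg]⟩
    · exact ⟨(n, false), by simp [hg]⟩
  have hgdense : ∀ w, DenseRange (g w) := by
    intro w
    have h1 : DenseRange ((Homeomorph.addRight w) ∘ u) :=
      ((Homeomorph.addRight w).surjective.denseRange).comp hud (Homeomorph.addRight w).continuous
    have h2 : Set.range ((Homeomorph.addRight w) ∘ u) ⊆ Set.range (g w) := by
      rintro x ⟨n, rfl⟩
      exact ⟨(n, true), by simp [hg, Homeomorph.addRight]⟩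
    exact Dense.mono h2 h1
  -- the homogeneous functional
  set Cnd : Tsp l → Set (RPath l d) :=
    fun w => {f | ∀ q : ℕ × Bool, ‖f (g w q)‖ ≤ c * ‖f 0‖} with hCnd
  have hCndm : ∀ w, MeasurableSet (Cnd w) := by
    intro w
    have : Cnd w = ⋂ q : ℕ × Bool, {f : RPath l d | ‖f (g w q)‖ ≤ c * ‖f 0‖} := by
      ext f; simp [hCnd, Set.mem_iInter]
    rw [this]
    exact MeasurableSet.iInter fun q =>
      measurableSet_le (measurable_pi_apply (g w q)).norm
        (((measurable_pi_apply (0 : Tsp l)).norm).const_mul c)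
  set F : Tsp l → RPath l d → ℝ≥0∞ :=
    fun w f => ENNReal.ofReal (‖f 0‖ ^ α) * (Cnd w).indicator (fun _ => 1) f with hF
  have hFm : ∀ w, Measurable (F w) := fun w =>
    (((Real.continuous_rpow_const hα.le).measurable.comp
      (measurable_pi_apply (0 : Tsp l)).norm).ennreal_ofReal).mul
      (measurable_const.indicator (hCndm w))
  have hFhom : ∀ w, Hom l d α (F w) := by
    intro w
    refine ⟨hFm w, fun a ha f => ?_⟩
    have hmem : (fun t => a • f t) ∈ Cnd w ↔ f ∈ Cnd w := by
      simp only [hCnd, Set.mem_setOf_eq, norm_smul, Real.norm_eq_abs, abs_of_pos ha]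
      refine forall_congr' fun q => ?_
      rw [mul_left_comm c a]
      exact mul_le_mul_iff_right₀ ha
    have hind : (Cnd w).indicator (fun _ => (1:ℝ≥0∞)) (fun t => a • f t)
        = (Cnd w).indicator (fun _ => 1) f := by
      by_cases hf : f ∈ Cnd w
      · rw [Set.indicator_of_mem hf, Set.indicator_of_mem (hmem.mpr hf)]
      · rw [Set.indicator_of_notMem hf,
          Set.indicator_of_notMem (fun hyp => hf (hmem.mp hyp))]
    simp only [hF]
    rw [hind, norm_smul, Real.norm_eq_abs, abs_of_pos ha,
      Real.mul_rpow ha.le (norm_nonneg _), ENNReal.ofReal_mul (Real.rpow_nonneg ha.le _),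
      mul_assoc]
  have hshift0 : ∀ f : RPath l d, shift 0 f = f := fun f => funext fun t => by simp [shift]
  have hFshift : ∀ (w h : Tsp l) (f : RPath l d),
      F w (shift h f) = ENNReal.ofReal (‖f (-h)‖ ^ α) *
        (if (∀ q : ℕ × Bool, ‖f (g w q - h)‖ ≤ c * ‖f (-h)‖) then 1 else 0) := by
    intro w h f
    have h0 : shift h f 0 = f (-h) := by simp [shift]
    have hmem : (shift h f ∈ Cnd w) ↔ (∀ q : ℕ × Bool, ‖f (g w q - h)‖ ≤ c * ‖f (-h)‖) := by
      simp [hCnd, shift, zero_sub]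
    simp only [hF, Set.indicator_apply, h0, hmem]
  -- Step 2: the functional integrates to zero against Z
  have step2 : ∀ w, (∫⁻ ω, F w (Z ω) ∂P) = 0 := by
    intro w
    have hm1 : Measurable fun p : Tsp l × Ω => ZT p.2 (-p.1) :=
      hmeas.comp (measurable_snd.prodMk measurable_fst.neg)
    have hm2 : ∀ q : ℕ × Bool, Measurable fun p : Tsp l × Ω => ZT p.2 (g w q - p.1) := fun q =>
      hmeas.comp (measurable_snd.prodMk (measurable_const.sub measurable_fst))
    have hGm : Measurable fun p : Tsp l × Ω => F w (shift p.1 (ZT p.2)) := by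
      have heq : (fun p : Tsp l × Ω => F w (shift p.1 (ZT p.2)))
          = fun p => ENNReal.ofReal (‖ZT p.2 (-p.1)‖ ^ α) *
              (if (∀ q : ℕ × Bool, ‖ZT p.2 (g w q - p.1)‖ ≤ c * ‖ZT p.2 (-p.1)‖)
                then 1 else 0) := by
        funext p; exact hFshift w p.1 (ZT p.2)
      rw [heq]
      refine Measurable.mul
        (((Real.continuous_rpow_const hα.le).measurable.comp hm1.norm).ennreal_ofReal) ?_
      refine Measurable.ite ?_ measurable_const measurable_const
      have : {p : Tsp l × Ω | ∀ q : ℕ × Bool, ‖ZT p.2 (g w q - p.1)‖ ≤ c * ‖ZT p.2 (-p.1)‖}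
          = ⋂ q : ℕ × Bool, {p : Tsp l × Ω | ‖ZT p.2 (g w q - p.1)‖ ≤ c * ‖ZT p.2 (-p.1)‖} := by
        ext p; simp [Set.mem_iInter]
      rw [this]
      exact MeasurableSet.iInter fun q =>
        measurableSet_le (hm2 q).norm (hm1.norm.const_mul c)
    have hinner : ∀ ω, (∫⁻ h : Tsp l, F w (shift h (ZT ω))) = 0 := by
      intro ω
      have hA0 : volume {t : Tsp l | 0 < ‖ZT ω t‖ ∧
          ∀ q : ℕ × Bool, ‖ZT ω (g w q + t)‖ ≤ c * ‖ZT ω t‖} = 0 :=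
        kernelA _ ((hmeas.comp measurable_prodMk_left).norm) hc0.le hc1 (g w)
          (hgsym w) (hgdense w)
      have hsub : {h : Tsp l | F w (shift h (ZT ω)) ≠ 0}
          ⊆ Neg.neg ⁻¹' {t : Tsp l | 0 < ‖ZT ω t‖ ∧
              ∀ q : ℕ × Bool, ‖ZT ω (g w q + t)‖ ≤ c * ‖ZT ω t‖} := by
        intro h hne
        rw [Set.mem_setOf_eq, hFshift] at hne
        obtain ⟨h1, h2⟩ := mul_ne_zero_iff.mp hne
        have hpos : 0 < ‖ZT ω (-h)‖ := by
          rcases (norm_nonneg (ZT ω (-h))).lt_or_eq with hlt | heq0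
          · exact hlt
          · exact absurd (by rw [← heq0, Real.zero_rpow hα.ne', ENNReal.ofReal_zero]) h1
        have hcond : ∀ q : ℕ × Bool, ‖ZT ω (g w q - h)‖ ≤ c * ‖ZT ω (-h)‖ := by
          by_contra hno; rw [if_neg hno] at h2; exact h2 rfl
        refine ⟨hpos, fun q => ?_⟩
        have := hcond q
        rwa [sub_eq_add_neg] at this
      have hze : ∀ᵐ h : Tsp l, F w (shift h (ZT ω)) = 0 := by
        rw [ae_iff]
        refine measure_mono_null hsub ?_
        rw [Measure.measure_preimage_neg]
        exact hA0
      calc (∫⁻ h : Tsp l, F w (shift h (ZT ω))) = ∫⁻ _h : Tsp l, 0 := lintegral_congr_ae hze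
        _ = 0 := lintegral_zero
    have hconst : ∀ h : Tsp l, (∫⁻ ω, F w (shift h (ZT ω)) ∂P) = ∫⁻ ω, F w (Z ω) ∂P :=
      fun h => (hid (F w) (hFhom w) h).symm
    have hzero : (∫⁻ ω, F w (Z ω) ∂P) * volume (Set.univ : Set (Tsp l)) = 0 := by
      calc (∫⁻ ω, F w (Z ω) ∂P) * volume (Set.univ : Set (Tsp l))
          = ∫⁻ _h : Tsp l, (∫⁻ ω, F w (Z ω) ∂P) := (lintegral_const _).symm
        _ = ∫⁻ h : Tsp l, ∫⁻ ω, F w (shift h (ZT ω)) ∂P :=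
            lintegral_congr fun h => (hconst h).symm
        _ = ∫⁻ ω, (∫⁻ h : Tsp l, F w (shift h (ZT ω))) ∂P :=
            lintegral_lintegral_swap hGm.aemeasurable
        _ = ∫⁻ _ω, (0:ℝ≥0∞) ∂P := lintegral_congr fun ω => hinner ω
        _ = 0 := lintegral_zero
    have huniv : volume (Set.univ : Set (Tsp l)) ≠ 0 :=
      (isOpen_univ.measure_pos volume ⟨0, trivial⟩).ne'
    rcases mul_eq_zero.mp hzero with h' | h'
    · exact h'
    · exact absurd h' huniv
  -- Step 1: choose a good offset w₀
  set Jfun : Tsp l × Ω → ℝ≥0∞ := fun p =>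
    if p.2 ∈ E ∧ ∃ q : ℕ × Bool, g p.1 q ∈ Bad p.2 then ρ p.2 else 0 with hJfun
  have hJm : Measurable Jfun := by
    refine Measurable.ite ?_ (hρm.comp measurable_snd) measurable_const
    have hA : MeasurableSet {p : Tsp l × Ω | p.2 ∈ E} := measurable_snd hEm
    have hB : MeasurableSet {p : Tsp l × Ω | ∃ q : ℕ × Bool, g p.1 q ∈ Bad p.2} := by
      have : {p : Tsp l × Ω | ∃ q : ℕ × Bool, g p.1 q ∈ Bad p.2}
          = ⋃ q : ℕ × Bool, {p : Tsp l × Ω | c * ‖ZT p.2 0‖ < ‖ZT p.2 (g p.1 q)‖} := by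
        ext p; simp [hBad, Set.mem_iUnion]
      rw [this]
      exact MeasurableSet.iUnion fun q =>
        measurableSet_lt
          (((hmeas.comp (measurable_snd.prodMk measurable_const)).norm).const_mul c)
          ((hmeas.comp (measurable_snd.prodMk ((hgm q).comp measurable_fst))).norm)
    have : {p : Tsp l × Ω | p.2 ∈ E ∧ ∃ q : ℕ × Bool, g p.1 q ∈ Bad p.2}
        = {p : Tsp l × Ω | p.2 ∈ E} ∩ {p : Tsp l × Ω | ∃ q : ℕ × Bool, g p.1 q ∈ Bad p.2} :=
      rfl
    rw [this]
    exact hA.inter hB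
  have hinner1 : ∀ ω, (∫⁻ w : Tsp l, Jfun (w, ω)) = 0 := by
    intro ω
    by_cases hωE : ω ∈ E
    · have hnull : volume {w : Tsp l | ∃ q : ℕ × Bool, g w q ∈ Bad ω} = 0 := by
        have hrw : {w : Tsp l | ∃ q : ℕ × Bool, g w q ∈ Bad ω}
            = ⋃ q : ℕ × Bool, (fun w => g w q) ⁻¹' Bad ω := by
          ext w; simp [Set.mem_iUnion, Set.mem_preimage]
        rw [hrw]
        refine measure_iUnion_null fun q => ?_
        rcases q with ⟨n, b⟩
        have hω0 : volume (Bad ω) = 0 := hωE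
        cases b
        · have hfun : (fun w : Tsp l => g w (n, false)) = fun w => -(u n) - w := by
            funext w; simp only [hg]; norm_num; abel
          rw [hfun]
          rw [(Measure.measurePreserving_sub_left volume (-(u n))).measure_preimage
            (hBadm ω).nullMeasurableSet]
          exact hω0
        · have hfun : (fun w : Tsp l => g w (n, true)) = fun w => u n + w := by
            funext w; simp [hg]
          rw [hfun]
          rw [(measurePreserving_add_left volume (u n)).measure_preimage
            (hBadm ω).nullMeasurableSet]
          exact hω0
      have hze : ∀ᵐ w : Tsp l, Jfun (w, ω) = 0 := by
        rw [ae_iff]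
        refine measure_mono_null ?_ hnull
        intro w hw
        simp only [Set.mem_setOf_eq, hJfun] at hw ⊢
        by_contra hno
        exact hw (by rw [if_neg (fun hyp => hno hyp.2)])
      calc (∫⁻ w : Tsp l, Jfun (w, ω)) = ∫⁻ _w : Tsp l, 0 := lintegral_congr_ae hze
        _ = 0 := lintegral_zero
    · have : ∀ w : Tsp l, Jfun (w, ω) = 0 := by
        intro w; simp only [hJfun]
        rw [if_neg (fun hyp => hωE hyp.1)]
      simp only [this, lintegral_zero]
  have hJint : (∫⁻ w : Tsp l, ∫⁻ ω, Jfun (w, ω) ∂P) = 0 := by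
    calc (∫⁻ w : Tsp l, ∫⁻ ω, Jfun (w, ω) ∂P)
        = ∫⁻ ω, (∫⁻ w : Tsp l, Jfun (w, ω)) ∂P := lintegral_lintegral_swap hJm.aemeasurable
      _ = ∫⁻ _ω, (0:ℝ≥0∞) ∂P := lintegral_congr fun ω => hinner1 ω
      _ = 0 := lintegral_zero
  have hJmeas' : Measurable fun w : Tsp l => ∫⁻ ω, Jfun (w, ω) ∂P :=
    hJm.lintegral_prod_right'
  have haew : ∀ᵐ w : Tsp l ∂volume, (∫⁻ ω, Jfun (w, ω) ∂P) = 0 :=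
    (lintegral_eq_zero_iff hJmeas').mp hJint
  haveI : (ae (volume : Measure (Tsp l))).NeBot := by
    refine ae_neBot.mpr fun h0 => ?_
    have := isOpen_univ.measure_pos (volume : Measure (Tsp l)) ⟨0, trivial⟩
    rw [h0] at this
    simp at this
  obtain ⟨w₀, hw₀⟩ := haew.exists
  -- conclude
  have hκ0 : (∫⁻ ω, F w₀ (ZT ω) ∂P) = 0 := by
    have := hid (F w₀) (hFhom w₀) 0
    simp only [hshift0] at this
    rw [← this]
    exact step2 w₀
  have hpoint : ∀ ω, E.indicator ρ ω ≤ F w₀ (ZT ω) + Jfun (w₀, ω) := by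
    intro ω
    by_cases hωE : ω ∈ E
    · rw [Set.indicator_of_mem hωE]
      by_cases hhit : ∃ q : ℕ × Bool, g w₀ q ∈ Bad ω
      · have : Jfun (w₀, ω) = ρ ω := by simp only [hJfun]; rw [if_pos ⟨hωE, hhit⟩]
        rw [this]; exact le_add_self
      · have hmemC : ZT ω ∈ Cnd w₀ := by
          intro q
          exact not_lt.mp (fun hyp => hhit ⟨q, hyp⟩)
        have : F w₀ (ZT ω) = ρ ω := by
          simp only [hF, Set.indicator_of_mem hmemC, mul_one, hρ]
        rw [this]; exact le_self_add
    · rw [Set.indicator_of_notMem hωE]; exact zero_le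
  have hfinal : (∫⁻ ω in E, ρ ω ∂P) ≤ 0 := by
    have hFZTm : Measurable fun ω => F w₀ (ZT ω) := (hFm w₀).comp hZTfull
    calc (∫⁻ ω in E, ρ ω ∂P) = ∫⁻ ω, E.indicator ρ ω ∂P := (lintegral_indicator hEm ρ).symm
      _ ≤ ∫⁻ ω, (F w₀ (ZT ω) + Jfun (w₀, ω)) ∂P := lintegral_mono hpoint
      _ = (∫⁻ ω, F w₀ (ZT ω) ∂P) + ∫⁻ ω, Jfun (w₀, ω) ∂P := lintegral_add_left hFZTm _
      _ = 0 + 0 := by rw [hκ0, hw₀]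
      _ = 0 := by simp
  exact le_antisymm hfinal (zero_le)

/-- the tail RF `Ỹ = RΘ̃` (with `R` α-Pareto, realized on the product
space `(Ω × [1,∞), P̂ ⊗ μ_α)`) satisfies `B(Ỹ) > 0` almost surely. -/
theorem stmt3 {Ω : Type*} [MeasurableSpace Ω] (P : Measure Ω)
    [IsProbabilityMeasure P] (hPc : P.IsComplete) [NullSingletonClass P]
    {l d : ℕ} (hl : 1 ≤ l) (hd : 1 ≤ d) (α : ℝ) (hα : 0 < α)
    (Z : Ω → RPath l d) (hZ : StarC P α Z)
    (ZT : Ω → RPath l d) (hZT : MemC P P α Z ZT)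
    (μ : Measure ℝ) [IsProbabilityMeasure μ]
    (hμ : ∀ s : ℝ, 1 ≤ s → μ (Set.Ioi s) = ENNReal.ofReal (s ^ (-α))) :
    ∀ᵐ p ∂((tilted P α ZT).prod μ),
      0 < volume {t : Tsp l | 1 < p.2 * ‖localRF ZT p.1 t‖} := by
  classical
  obtain ⟨hstar, hid⟩ := hZT
  obtain ⟨hmeas, hmass, -⟩ := hstar
  have hmeas : Measurable fun p : Ω × Tsp l => ZT p.1 p.2 := hmeas
  set ρ : Ω → ℝ≥0∞ := fun ω => ENNReal.ofReal (‖ZT ω 0‖ ^ α) with hρ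
  have hZT0 : Measurable fun ω => ZT ω 0 := hmeas.comp (measurable_id.prodMk measurable_const)
  have hρm : Measurable ρ :=
    ((Real.continuous_rpow_const hα.le).measurable.comp hZT0.norm).ennreal_ofReal
  haveI hprob : IsProbabilityMeasure (tilted P α ZT) := by
    constructor
    rw [tilted, withDensity_apply _ MeasurableSet.univ, Measure.restrict_univ]
    exact hmass
  -- measurability of the local RF and of the volume function
  have hlocm : Measurable fun p : Ω × Tsp l => localRF ZT p.1 p.2 := by
    have : (fun p : Ω × Tsp l => localRF ZT p.1 p.2)
        = fun p => if ‖ZT p.1 0‖ = 0 then 0 else ‖ZT p.1 0‖⁻¹ • ZT p.1 p.2 := rfl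
    rw [this]
    refine Measurable.ite ?_ measurable_const ?_
    · exact (hZT0.comp measurable_fst).norm (measurableSet_singleton 0)
    · exact (((hZT0.comp measurable_fst).norm).inv).smul hmeas
  set S2 : Set ((Ω × ℝ) × Tsp l) := {q | 1 < q.1.2 * ‖localRF ZT q.1.1 q.2‖} with hS2
  have hS2m : MeasurableSet S2 := by
    refine measurableSet_lt measurable_const (Measurable.mul (measurable_fst.snd) ?_)
    exact (hlocm.comp ((measurable_fst.fst).prodMk measurable_snd)).norm
  have hVmeas : Measurable fun p : Ω × ℝ =>
      volume {t : Tsp l | 1 < p.2 * ‖localRF ZT p.1 t‖} := by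
    have : (fun p : Ω × ℝ => volume {t : Tsp l | 1 < p.2 * ‖localRF ZT p.1 t‖})
        = fun p => volume (Prod.mk p ⁻¹' S2) := rfl
    rw [this]
    exact measurable_measure_prodMk_left hS2m
  rw [ae_iff]
  set ν := tilted P α ZT with hν
  -- decompose the bad set
  set A0 : Set Ω := {ω | ‖ZT ω 0‖ = 0} with hA0
  have hA0m : MeasurableSet A0 := hZT0.norm (measurableSet_singleton 0)
  set B2 : Set (Ω × ℝ) := {p | 1 < p.2 ∧ 0 < ‖ZT p.1 0‖ ∧
      volume {t : Tsp l | 1 < p.2 * ‖localRF ZT p.1 t‖} = 0} with hB2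
  have hB2m : MeasurableSet B2 := by
    have : B2 = {p : Ω × ℝ | 1 < p.2} ∩ ({p : Ω × ℝ | 0 < ‖ZT p.1 0‖} ∩
        {p : Ω × ℝ | volume {t : Tsp l | 1 < p.2 * ‖localRF ZT p.1 t‖} = 0}) := rfl
    rw [this]
    refine (measurableSet_lt measurable_const measurable_snd).inter
      ((measurableSet_lt measurable_const ((hZT0.comp measurable_fst).norm)).inter ?_)
    exact hVmeas (measurableSet_singleton 0)
  have hsubset : {p : Ω × ℝ | ¬ 0 < volume {t : Tsp l | 1 < p.2 * ‖localRF ZT p.1 t‖}}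
      ⊆ (A0 ×ˢ Set.univ ∪ Set.univ ×ˢ Set.Iic (1:ℝ)) ∪ B2 := by
    rintro ⟨ω, r⟩ hp
    simp only [Set.mem_setOf_eq, not_lt, le_zero_iff] at hp
    by_cases h0 : ‖ZT ω 0‖ = 0
    · exact Or.inl (Or.inl ⟨h0, Set.mem_univ _⟩)
    by_cases hr : r ≤ 1
    · exact Or.inl (Or.inr ⟨Set.mem_univ _, hr⟩)
    · exact Or.inr ⟨not_le.mp hr, lt_of_le_of_ne (norm_nonneg _) (Ne.symm h0), hp⟩
  refine measure_mono_null hsubset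
    (measure_union_null (measure_union_null ?_ ?_) ?_)
  · -- the event ‖ZT 0‖ = 0 is ν-null
    rw [Measure.prod_prod]
    have : ν A0 = 0 := by
      rw [hν, tilted, withDensity_apply _ hA0m]
      have hz : ∀ᵐ ω ∂P, ω ∈ A0 → ENNReal.ofReal (‖ZT ω 0‖ ^ α) = 0 := by
        refine Filter.Eventually.of_forall fun ω hω => ?_
        rw [Set.mem_setOf_eq] at hω
        rw [hω, Real.zero_rpow hα.ne', ENNReal.ofReal_zero]
      calc ∫⁻ ω in A0, ENNReal.ofReal (‖ZT ω 0‖ ^ α) ∂P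
          = ∫⁻ _ω in A0, (0:ℝ≥0∞) ∂P := setLIntegral_congr_fun hA0m (fun ω hω => by
              rw [Set.mem_setOf_eq] at hω; rw [hω, Real.zero_rpow hα.ne', ENNReal.ofReal_zero])
        _ = 0 := lintegral_zero
    rw [this, zero_mul]
  · -- the event r ≤ 1 is μ-null
    rw [Measure.prod_prod]
    have h1 : μ (Set.Ioi (1:ℝ)) = 1 := by
      rw [hμ 1 le_rfl, Real.one_rpow, ENNReal.ofReal_one]
    have : μ (Set.Iic (1:ℝ)) = 0 := by
      have hc := measure_compl (measurableSet_Ioi : MeasurableSet (Set.Ioi (1:ℝ)))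
        (measure_ne_top μ _)
      rw [Set.compl_Ioi, h1, measure_univ] at hc
      simp at hc
      exact hc
    rw [this, mul_zero]
  · -- the main event, via keyzero
    rw [← Measure.prod_swap, Measure.map_apply measurable_swap hB2m,
      Measure.prod_apply (measurable_swap hB2m)]
    have hsec : ∀ r : ℝ, ν (Prod.mk r ⁻¹' (Prod.swap ⁻¹' B2)) = 0 := by
      intro r
      by_cases hr : 1 < r
      · have hc0 : (0:ℝ) < r⁻¹ := inv_pos.mpr (lt_trans one_pos hr)
        have hc1 : r⁻¹ < 1 := inv_lt_one_of_one_lt₀ hr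
        set E : Set Ω := {ω | volume {t : Tsp l | r⁻¹ * ‖ZT ω 0‖ < ‖ZT ω t‖} = 0} with hEdef
        have hSm : MeasurableSet {p : Ω × Tsp l | r⁻¹ * ‖ZT p.1 0‖ < ‖ZT p.1 p.2‖} :=
          measurableSet_lt
            (((hmeas.comp (measurable_fst.prodMk measurable_const)).norm).const_mul _)
            hmeas.norm
        have hEm : MeasurableSet E := by
          have : E = (fun ω => volume (Prod.mk ω ⁻¹'
              {p : Ω × Tsp l | r⁻¹ * ‖ZT p.1 0‖ < ‖ZT p.1 p.2‖})) ⁻¹' {0} := rfl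
          rw [this]
          exact measurable_measure_prodMk_left hSm (measurableSet_singleton 0)
        have hkey := keyzero P hα Z ZT hmeas hid hc0 hc1
        have hνE : ν E = 0 := by
          rw [hν, tilted, withDensity_apply _ hEm]
          exact hkey
        refine measure_mono_null ?_ hνE
        intro ω hω
        simp only [Set.mem_preimage, Prod.swap_prod_mk] at hω
        obtain ⟨-, hb, hvol⟩ := hω
        rw [hEdef, Set.mem_setOf_eq]
        have hsets : {t : Tsp l | r⁻¹ * ‖ZT ω 0‖ < ‖ZT ω t‖}
            = {t : Tsp l | 1 < r * ‖localRF ZT ω t‖} := by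
          ext t
          have hb' : ‖ZT ω 0‖ ≠ 0 := ne_of_gt hb
          have hloc : localRF ZT ω t = ‖ZT ω 0‖⁻¹ • ZT ω t := by
            simp [localRF, hb']
          rw [Set.mem_setOf_eq, Set.mem_setOf_eq, hloc, norm_smul, Real.norm_eq_abs,
            abs_of_pos (inv_pos.mpr hb)]
          rw [show r * (‖ZT ω 0‖⁻¹ * ‖ZT ω t‖) = (r * ‖ZT ω t‖) / ‖ZT ω 0‖ by
            rw [div_eq_mul_inv]; ring]
          rw [one_lt_div hb]
          rw [inv_mul_lt_iff₀ (lt_trans one_pos hr)]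
        rw [hsets, hvol]
      · have : (Prod.mk r ⁻¹' (Prod.swap ⁻¹' B2)) = ∅ := by
          ext ω
          simp only [Set.mem_preimage, Prod.swap_prod_mk, hB2, Set.mem_setOf_eq,
            Set.mem_empty_iff_false, iff_false]
          rintro ⟨h1', -⟩
          exact hr h1'
        rw [this, measure_empty]
    calc (∫⁻ r, ν (Prod.mk r ⁻¹' (Prod.swap ⁻¹' B2)) ∂μ)
        = ∫⁻ _r, (0:ℝ≥0∞) ∂μ := lintegral_congr hsec
      _ = 0 := lintegral_zero
end
end

section
/- Let Θ be a spectral tail RF and let R be an α-Pareto random variable independent of Θ, defined on the same probability space. Then the RF Y(t) = R Θ(t) satisfies: ‖Y(0)‖ > 1 almost surely, S(Y) > 0 almost surely, and for every product-measurable Γ : D → [0, ∞], every h ∈ T and every x > 0, E[Γ(x B^h Y) 1{x ‖Y(−h)‖ > 1}] = x^α E[Γ(Y) 1{‖Y(h)‖ > x}]. -/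
open MeasureTheory ProbabilityTheory Filter
open scoped ENNReal Topology

noncomputable section

/-- A spectral tail random field. -/
def SpectralTail {Ω : Type*} [MeasurableSpace Ω] (P : Measure Ω) {l d : ℕ} (α : ℝ)
    (Θ : Ω → RPath l d) : Prop :=
  JointlyMeasurable Θ ∧
  P {ω | ‖Θ ω 0‖ = 1} = 1 ∧
  P {ω | 0 < Sfun α (Θ ω)} = 1 ∧
  ∀ Γ : RPath l d → ℝ≥0∞, Hom l d 0 Γ → ∀ h : Tsp l,
    (∫⁻ ω, ENNReal.ofReal (‖Θ ω h‖ ^ α) * Γ (Θ ω) ∂P) =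
    ∫⁻ ω, (if ‖Θ ω (-h)‖ ≠ 0 then 1 else 0) * Γ (shift h (Θ ω)) ∂P

open Set

-- basic prob helpers
lemma prob_eq_one_of_ae {Ω : Type*} [MeasurableSpace Ω] (P : Measure Ω) [IsProbabilityMeasure P]
    {S : Set Ω} (h : ∀ᵐ ω ∂P, ω ∈ S) : P S = 1 := by
  refine le_antisymm prob_le_one ?_
  have h0 : P Sᶜ = 0 := by
    have := h
    rw [ae_iff] at this
    simpa [Set.compl_def] using this
  calc (1:ℝ≥0∞) = P Set.univ := measure_univ.symm
    _ ≤ P S + P Sᶜ := by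
        rw [← Set.union_compl_self S]; exact measure_union_le _ _
    _ = P S := by rw [h0, add_zero]

lemma ae_of_prob_eq_one {Ω : Type*} [MeasurableSpace Ω] (P : Measure Ω) [IsProbabilityMeasure P]
    {S : Set Ω} (hS : MeasurableSet S) (h : P S = 1) : ∀ᵐ ω ∂P, ω ∈ S := by
  rw [ae_iff]
  have : P Sᶜ = 0 := by
    rw [measure_compl hS (measure_ne_top _ _), h, measure_univ, tsub_self]
  simpa [Set.compl_def] using this

-- indicator extension lemma
lemma ind_Ioi_aux (g : ℝ → ℝ≥0∞) :
    ∫⁻ u in Ioi (0:ℝ), g u * (if 1 < u then 1 else 0) = ∫⁻ u in Ioi (1:ℝ), g u := by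
  have h1 : ∀ u : ℝ, g u * (if 1 < u then 1 else 0) = (Ioi (1:ℝ)).indicator g u := by
    intro u
    by_cases h : 1 < u <;> simp [Set.indicator, h]
  simp only [h1]
  rw [lintegral_indicator measurableSet_Ioi, Measure.restrict_restrict measurableSet_Ioi,
    Set.Ioi_inter_Ioi]
  norm_num

-- substitution lemma
lemma subst_aux {c : ℝ} (hc : 0 < c) (ψ : ℝ → ℝ≥0∞) :
    ∫⁻ u in Ioi (0:ℝ), ψ (c * u) = ENNReal.ofReal c⁻¹ * ∫⁻ r in Ioi (0:ℝ), ψ r := by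
  have hT : MeasurableEmbedding (fun u : ℝ => c * u) :=
    (Homeomorph.mulLeft₀ c hc.ne').measurableEmbedding
  have hpre : (fun u : ℝ => c * u) ⁻¹' (Ioi 0) = Ioi (0:ℝ) := by
    ext u; simp [Set.mem_Ioi, mul_pos_iff_of_pos_left hc]
  have h1 : Measure.map (fun u : ℝ => c * u) (volume.restrict (Ioi 0)) =
      ENNReal.ofReal c⁻¹ • volume.restrict (Ioi (0:ℝ)) := by
    rw [show volume.restrict (Ioi (0:ℝ)) = volume.restrict ((fun u : ℝ => c * u) ⁻¹' (Ioi 0)) by rw [hpre],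
      ← Measure.restrict_map hT.measurable measurableSet_Ioi,
      Real.map_volume_mul_left hc.ne', abs_of_pos (inv_pos.mpr hc),
      Measure.restrict_smul, hpre]
  calc ∫⁻ u in Ioi (0:ℝ), ψ (c * u)
      = ∫⁻ a, ψ a ∂(Measure.map (fun u : ℝ => c * u) (volume.restrict (Ioi 0))) :=
        (hT.lintegral_map ψ).symm
    _ = ENNReal.ofReal c⁻¹ * ∫⁻ r in Ioi (0:ℝ), ψ r := by
        rw [h1, lintegral_smul_measure, smul_eq_mul]

def paretoDens (α u : ℝ) : ℝ≥0∞ := ENNReal.ofReal (α * u ^ (-α-1))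

lemma paretoDens_meas (α : ℝ) : Measurable (paretoDens α) :=
  ENNReal.measurable_ofReal.comp ((measurable_id.pow_const (-α-1)).const_mul α)

def paretoM (α : ℝ) : Measure ℝ := (volume.restrict (Ioi 1)).withDensity (paretoDens α)

lemma pareto_tail {α : ℝ} (hα : 0 < α) {s : ℝ} (hs : 0 < s) :
    ∫⁻ r in Ioi s, paretoDens α r = ENNReal.ofReal (s ^ (-α)) := by
  unfold paretoDens
  rw [← ofReal_integral_eq_lintegral_ofReal]
  · congr 1
    rw [MeasureTheory.integral_const_mul, integral_Ioi_rpow_of_lt (by linarith) hs]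
    have h1 : -α - 1 + 1 = -α := by ring
    rw [h1]
    field_simp
  · exact (integrableOn_Ioi_rpow_of_lt (by linarith) hs).const_mul α
  · filter_upwards [ae_restrict_mem measurableSet_Ioi] with r hr
    have hr0 : (0:ℝ) < r := hs.trans hr
    positivity

lemma pareto_lintegral {α : ℝ} {ψ : ℝ → ℝ≥0∞} (hψ : Measurable ψ) :
    ∫⁻ r, ψ r ∂(paretoM α) = ∫⁻ r in Ioi (1:ℝ), paretoDens α r * ψ r := by
  rw [paretoM, lintegral_withDensity_eq_lintegral_mul _ (paretoDens_meas α) hψ]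
  rfl

lemma pareto_law {Ω : Type*} [MeasurableSpace Ω] (P : Measure Ω) [IsProbabilityMeasure P]
    {α : ℝ} (hα : 0 < α) {R : Ω → ℝ} (hRm : Measurable R)
    (hRlaw : ∀ s : ℝ, 1 ≤ s → P {ω | s < R ω} = ENNReal.ofReal (s ^ (-α))) :
    P.map R = paretoM α := by
  have hmapP : IsProbabilityMeasure (P.map R) := Measure.isProbabilityMeasure_map hRm.aemeasurable
  have htail : ∀ a : ℝ, (P.map R) (Ioi a) = (paretoM α) (Ioi a) := by
    intro a
    have hmapa : (P.map R) (Ioi a) = P {ω | a < R ω} := by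
      rw [Measure.map_apply hRm measurableSet_Ioi]; rfl
    have hpar : (paretoM α) (Ioi a) = ∫⁻ r in Ioi a ∩ Ioi 1, paretoDens α r := by
      rw [paretoM, withDensity_apply _ measurableSet_Ioi,
        Measure.restrict_restrict measurableSet_Ioi]
    rcases le_or_gt 1 a with hc | hc
    · rw [hmapa, hRlaw a hc, hpar,
        Set.inter_eq_self_of_subset_left (Set.Ioi_subset_Ioi hc),
        pareto_tail hα (lt_of_lt_of_le one_pos hc)]
    · have h2 : Ioi a ∩ Ioi 1 = Ioi (1:ℝ) :=
        Set.inter_eq_self_of_subset_right (Set.Ioi_subset_Ioi hc.le)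
      have h3 : (paretoM α) (Ioi a) = 1 := by
        rw [hpar, h2, pareto_tail hα one_pos, Real.one_rpow, ENNReal.ofReal_one]
      have h4 : P {ω | a < R ω} = 1 := by
        refine le_antisymm prob_le_one ?_
        have h5 : P {ω | 1 < R ω} ≤ P {ω | a < R ω} :=
          measure_mono (fun ω hω => lt_trans hc hω)
        rw [hRlaw 1 le_rfl, Real.one_rpow, ENNReal.ofReal_one] at h5
        exact h5
      rw [hmapa, h4, h3]
  have hparP : IsProbabilityMeasure (paretoM α) := by
    constructor
    rw [← Set.Iic_union_Ioi (a := (0:ℝ)), measure_union (Set.Iic_disjoint_Ioi le_rfl) measurableSet_Ioi]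
    have h6 : (paretoM α) (Iic (0:ℝ)) = 0 := by
        rw [paretoM, withDensity_apply _ measurableSet_Iic,
          Measure.restrict_restrict measurableSet_Iic]
        have : Iic (0:ℝ) ∩ Ioi 1 = ∅ := by
          ext u; simp only [Set.mem_inter_iff, Set.mem_Iic, Set.mem_Ioi, Set.mem_empty_iff_false,
            iff_false, not_and]
          intro h1 h2; linarith
        rw [this]; simp
    rw [h6, zero_add, ← htail 0]
    have := hRlaw 1 le_rfl
    have h7 : (P.map R) (Ioi (0:ℝ)) = P {ω | 0 < R ω} := by
      rw [Measure.map_apply hRm measurableSet_Ioi]; rfl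
    rw [h7]
    refine le_antisymm prob_le_one ?_
    have h5 : P {ω | 1 < R ω} ≤ P {ω | 0 < R ω} :=
      measure_mono (fun ω hω => show (0:ℝ) < R ω from lt_trans one_pos hω)
    rw [hRlaw 1 le_rfl, Real.one_rpow, ENNReal.ofReal_one] at h5
    exact h5
  refine Measure.ext_of_Iic (P.map R) (paretoM α) (fun a => ?_)
  have e1 : (P.map R) (Iic a) = 1 - (P.map R) (Ioi a) := by
    rw [← Set.compl_Ioi, measure_compl measurableSet_Ioi (measure_ne_top _ _), measure_univ]
  have e2 : (paretoM α) (Iic a) = 1 - (paretoM α) (Ioi a) := by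
    rw [← Set.compl_Ioi, measure_compl measurableSet_Ioi (measure_ne_top _ _), measure_univ]
  rw [e1, e2, htail a]

-- ### the H functional and Γ₀
def Hfun {l d : ℕ} (α x : ℝ) (h : Tsp l) (Γ : RPath l d → ℝ≥0∞) (f : RPath l d) : ℝ≥0∞ :=
  ∫⁻ u in Ioi (0:ℝ), paretoDens α u * (Γ (fun t => (x*u) • f t) *
    ((if 1 < x*u*‖f 0‖ then 1 else 0) * (if 1 < u*‖f h‖ then 1 else 0)))

lemma Hfun_integrand_meas {l d : ℕ} (α x : ℝ) (h : Tsp l) {Γ : RPath l d → ℝ≥0∞}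
    (hΓ : Measurable Γ) :
    Measurable (fun p : RPath l d × ℝ => paretoDens α p.2 * (Γ (fun t => (x*p.2) • p.1 t) *
      ((if 1 < x*p.2*‖p.1 0‖ then (1:ℝ≥0∞) else 0) *
        (if 1 < p.2*‖p.1 h‖ then (1:ℝ≥0∞) else 0)))) := by
  have hd : Measurable fun p : RPath l d × ℝ => paretoDens α p.2 :=
    (paretoDens_meas α).comp measurable_snd
  have harg : Measurable fun p : RPath l d × ℝ => (fun t => (x*p.2) • p.1 t : RPath l d) :=
    measurable_pi_lambda _ fun t =>
      (measurable_snd.const_mul x).smul ((measurable_pi_apply t).comp measurable_fst)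
  have h1 : Measurable fun p : RPath l d × ℝ => x*p.2*‖p.1 0‖ :=
    (measurable_snd.const_mul x).mul ((measurable_pi_apply 0).comp measurable_fst).norm
  have h2 : Measurable fun p : RPath l d × ℝ => p.2*‖p.1 h‖ :=
    measurable_snd.mul ((measurable_pi_apply h).comp measurable_fst).norm
  exact hd.mul ((hΓ.comp harg).mul
    ((Measurable.ite (measurableSet_lt measurable_const h1) measurable_const measurable_const).mul
      (Measurable.ite (measurableSet_lt measurable_const h2) measurable_const measurable_const)))

lemma Hfun_meas {l d : ℕ} (α x : ℝ) (h : Tsp l) {Γ : RPath l d → ℝ≥0∞} (hΓ : Measurable Γ) :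
    Measurable (Hfun α x h Γ) :=
  Measurable.lintegral_prod_right' (ν := volume.restrict (Ioi (0:ℝ)))
    (Hfun_integrand_meas α x h hΓ)

lemma Hfun_homog {l d : ℕ} {α x : ℝ} (hα : 0 < α) (hx : 0 < x) (h : Tsp l)
    (Γ : RPath l d → ℝ≥0∞) {c : ℝ} (hc : 0 < c) (f : RPath l d) :
    Hfun α x h Γ (fun t => c • f t) = ENNReal.ofReal (c ^ α) * Hfun α x h Γ f := by
  set ψ : ℝ → ℝ≥0∞ := fun w => paretoDens α (c⁻¹ * w) * (Γ (fun t => (x*w) • f t) *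
    ((if 1 < x*w*‖f 0‖ then 1 else 0) * (if 1 < w*‖f h‖ then 1 else 0))) with hψ
  have key : ∀ u : ℝ, paretoDens α u * (Γ (fun t => (x*u) • c • f t) *
      ((if 1 < x*u*‖c • f 0‖ then (1:ℝ≥0∞) else 0) *
        (if 1 < u*‖c • f h‖ then (1:ℝ≥0∞) else 0))) = ψ (c * u) := by
    intro u
    have hc' : c⁻¹ * (c * u) = u := by field_simp
    have hΓarg : (fun t => (x*(c*u)) • f t) = (fun t => (x*u) • c • f t) := by
      funext t; rw [smul_smul]; congr 1; ring
    have hi1 : x*u*‖c • f 0‖ = x*(c*u)*‖f 0‖ := by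
      rw [norm_smul, Real.norm_of_nonneg hc.le]; ring
    have hi2 : u*‖c • f h‖ = (c*u)*‖f h‖ := by
      rw [norm_smul, Real.norm_of_nonneg hc.le]; ring
    rw [hψ]
    simp only [hc', hΓarg, hi1, hi2]
  have e1 : Hfun α x h Γ (fun t => c • f t) = ∫⁻ u in Ioi (0:ℝ), ψ (c * u) := by
    unfold Hfun
    exact lintegral_congr fun u => key u
  rw [e1, subst_aux hc ψ]
  have e2 : ∫⁻ w in Ioi (0:ℝ), ψ w
      = ENNReal.ofReal (c ^ (α+1)) * Hfun α x h Γ f := by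
    unfold Hfun
    rw [← lintegral_const_mul' _ _ ENNReal.ofReal_ne_top]
    refine setLIntegral_congr_fun measurableSet_Ioi (fun w hw => ?_)
    have hw0 : (0:ℝ) < w := hw
    have hdens : paretoDens α (c⁻¹ * w) = ENNReal.ofReal (c ^ (α+1)) * paretoDens α w := by
      unfold paretoDens
      rw [Real.mul_rpow (inv_nonneg.mpr hc.le) hw0.le, Real.inv_rpow hc.le,
        ← Real.rpow_neg hc.le, show -(-α-1) = α+1 by ring,
        show α * (c ^ (α+1) * w ^ (-α-1)) = c ^ (α+1) * (α * w ^ (-α-1)) by ring,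
        ENNReal.ofReal_mul (Real.rpow_nonneg hc.le _)]
    simp only [hψ]
    rw [hdens]; ring
  rw [e2, ← mul_assoc, ← ENNReal.ofReal_mul (inv_nonneg.mpr hc.le)]
  congr 2
  rw [show c⁻¹ = c ^ (-1:ℝ) by rw [Real.rpow_neg_one], ← Real.rpow_add hc]
  congr 1; ring

def Gam0 {l d : ℕ} (α x : ℝ) (h : Tsp l) (Γ : RPath l d → ℝ≥0∞) (f : RPath l d) : ℝ≥0∞ :=
  Hfun α x h Γ f * (ENNReal.ofReal (‖f h‖ ^ α))⁻¹

lemma Gam0_hom {l d : ℕ} {α x : ℝ} (hα : 0 < α) (hx : 0 < x) (h : Tsp l)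
    {Γ : RPath l d → ℝ≥0∞} (hΓ : Measurable Γ) : Hom l d 0 (Gam0 α x h Γ) := by
  constructor
  · exact (Hfun_meas α x h hΓ).mul
      (Measurable.inv (ENNReal.measurable_ofReal.comp ((measurable_pi_apply h).norm.pow_const α)))
  · intro c hc f
    rw [Real.rpow_zero, ENNReal.ofReal_one, one_mul]
    unfold Gam0
    rw [Hfun_homog hα hx h Γ hc f]
    have hn : ‖c • f h‖ ^ α = c ^ α * ‖f h‖ ^ α := by
      rw [norm_smul, Real.norm_of_nonneg hc.le, Real.mul_rpow hc.le (norm_nonneg _)]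
    rw [hn, ENNReal.ofReal_mul (Real.rpow_nonneg hc.le _)]
    set a := ENNReal.ofReal (c ^ α) with ha
    set b := ENNReal.ofReal (‖f h‖ ^ α) with hb
    have ha0 : a ≠ 0 := by
      rw [ha, Ne, ENNReal.ofReal_eq_zero, not_le]
      exact Real.rpow_pos_of_pos hc α
    have hat : a ≠ ⊤ := ENNReal.ofReal_ne_top
    rw [ENNReal.mul_inv (Or.inl ha0) (Or.inl hat)]
    calc a * Hfun α x h Γ f * (a⁻¹ * b⁻¹)
        = (a * a⁻¹) * (Hfun α x h Γ f * b⁻¹) := by ring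
      _ = Hfun α x h Γ f * b⁻¹ := by rw [ENNReal.mul_inv_cancel ha0 hat, one_mul]

lemma stepC {l d : ℕ} (α : ℝ) {x : ℝ} (h : Tsp l) (Γ : RPath l d → ℝ≥0∞)
    (f : RPath l d) (hf0 : ‖f 0‖ = 1) :
    ∫⁻ r in Ioi (1:ℝ), paretoDens α r *
        (Γ (fun t => (x*r) • f (t - h)) * (if 1 < x*r*‖f (-h)‖ then 1 else 0))
      = (if ‖f (-h)‖ ≠ 0 then 1 else 0) * Gam0 α x h Γ (shift h f) := by
  have hg : Gam0 α x h Γ (shift h f) = Hfun α x h Γ (shift h f) := by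
    unfold Gam0
    have hshh : shift h f h = f 0 := by simp [shift]
    rw [hshh, hf0, Real.one_rpow, ENNReal.ofReal_one, inv_one, mul_one]
  have hH : Hfun α x h Γ (shift h f) = ∫⁻ r in Ioi (1:ℝ), paretoDens α r *
      (Γ (fun t => (x*r) • f (t - h)) * (if 1 < x*r*‖f (-h)‖ then 1 else 0)) := by
    unfold Hfun
    rw [← ind_Ioi_aux (fun u => paretoDens α u *
      (Γ (fun t => (x*u) • f (t - h)) * (if 1 < x*u*‖f (-h)‖ then 1 else 0)))]
    refine lintegral_congr fun u => ?_
    simp only [shift, zero_sub, sub_self, hf0, mul_one]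
    ring
  rw [hg, hH]
  by_cases hne : ‖f (-h)‖ = 0
  · have hzero : ∀ r : ℝ, (if (1:ℝ) < x*r*‖f (-h)‖ then (1:ℝ≥0∞) else 0) = 0 := fun r => by
      rw [hne, mul_zero]; exact if_neg (by norm_num)
    have hz2 : ∀ r : ℝ, paretoDens α r *
        (Γ (fun t => (x*r) • f (t - h)) * (if 1 < x*r*‖f (-h)‖ then (1:ℝ≥0∞) else 0)) = 0 :=
      fun r => by rw [hzero r, mul_zero, mul_zero]
    rw [if_neg (not_not.mpr hne)]
    simp only [hz2, lintegral_zero, zero_mul]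
  · rw [if_pos hne, one_mul]

lemma stepD {l d : ℕ} {α x : ℝ} (hα : 0 < α) (hx : 0 < x) (h : Tsp l)
    (Γ : RPath l d → ℝ≥0∞) (f : RPath l d) (hf0 : ‖f 0‖ = 1) :
    ENNReal.ofReal (‖f h‖ ^ α) * Gam0 α x h Γ f
      = ENNReal.ofReal (x ^ α) * ∫⁻ r in Ioi (1:ℝ), paretoDens α r *
          (Γ (fun t => r • f t) * (if x < r * ‖f h‖ then 1 else 0)) := by
  have hi : ENNReal.ofReal (‖f h‖ ^ α) * Gam0 α x h Γ f = Hfun α x h Γ f := by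
    by_cases hne : ‖f h‖ = 0
    · have h2 : Hfun α x h Γ f = 0 := by
        unfold Hfun
        have hz : ∀ u : ℝ, (if (1:ℝ) < u*‖f h‖ then (1:ℝ≥0∞) else 0) = 0 := fun u => by
          rw [hne, mul_zero]; exact if_neg (by norm_num)
        simp [hz]
      rw [h2, hne, Real.zero_rpow hα.ne', ENNReal.ofReal_zero, zero_mul]
    · unfold Gam0
      set a := ENNReal.ofReal (‖f h‖ ^ α) with ha
      have ha0 : a ≠ 0 := by
        rw [ha, Ne, ENNReal.ofReal_eq_zero, not_le]
        exact Real.rpow_pos_of_pos (lt_of_le_of_ne (norm_nonneg _) (Ne.symm hne)) α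
      have hat : a ≠ ⊤ := ENNReal.ofReal_ne_top
      calc a * (Hfun α x h Γ f * a⁻¹) = (a * a⁻¹) * Hfun α x h Γ f := by ring
        _ = Hfun α x h Γ f := by rw [ENNReal.mul_inv_cancel ha0 hat, one_mul]
  rw [hi]
  rw [← ind_Ioi_aux (fun r => paretoDens α r *
    (Γ (fun t => r • f t) * (if x < r*‖f h‖ then 1 else 0)))]
  set ψ : ℝ → ℝ≥0∞ := fun r => paretoDens α r *
    (Γ (fun t => r • f t) * (if x < r*‖f h‖ then 1 else 0)) * (if 1 < r then 1 else 0) with hψ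
  have hx1 : ENNReal.ofReal x * ENNReal.ofReal x⁻¹ = 1 := by
    rw [← ENNReal.ofReal_mul hx.le, mul_inv_cancel₀ hx.ne', ENNReal.ofReal_one]
  have h3 : ∫⁻ r in Ioi (0:ℝ), ψ r = ENNReal.ofReal x * ∫⁻ u in Ioi (0:ℝ), ψ (x*u) := by
    rw [subst_aux hx ψ, ← mul_assoc, hx1, one_mul]
  have h4 : ∫⁻ u in Ioi (0:ℝ), ψ (x*u) = ENNReal.ofReal (x^(-α-1)) * Hfun α x h Γ f := by
    unfold Hfun
    rw [← lintegral_const_mul' _ _ ENNReal.ofReal_ne_top]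
    refine setLIntegral_congr_fun measurableSet_Ioi (fun u hu => ?_)
    have hu0 : (0:ℝ) < u := hu
    have hdens : paretoDens α (x*u) = ENNReal.ofReal (x^(-α-1)) * paretoDens α u := by
      unfold paretoDens
      rw [Real.mul_rpow hx.le hu0.le,
        show α * (x ^ (-α-1) * u ^ (-α-1)) = x ^ (-α-1) * (α * u ^ (-α-1)) by ring,
        ENNReal.ofReal_mul (Real.rpow_nonneg hx.le _)]
    have hind1 : (if x < (x*u)*‖f h‖ then (1:ℝ≥0∞) else 0)
        = (if 1 < u*‖f h‖ then 1 else 0) := by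
      refine if_congr ?_ rfl rfl
      rw [mul_assoc]
      exact lt_mul_iff_one_lt_right hx
    rw [hψ]
    simp only [hdens, hind1, hf0, mul_one]
    ring
  rw [h3, h4]
  rw [show ENNReal.ofReal (x^α) * (ENNReal.ofReal x * (ENNReal.ofReal (x^(-α-1)) * Hfun α x h Γ f))
      = (ENNReal.ofReal (x^α) * (ENNReal.ofReal x * ENNReal.ofReal (x^(-α-1)))) * Hfun α x h Γ f
    by ring]
  have hco : ENNReal.ofReal (x^α) * (ENNReal.ofReal x * ENNReal.ofReal (x^(-α-1))) = 1 := by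
    rw [← ENNReal.ofReal_mul hx.le, ← ENNReal.ofReal_mul (Real.rpow_nonneg hx.le _)]
    have : x ^ α * (x * x ^ (-α-1)) = 1 := by
      rw [mul_comm x, ← Real.rpow_add_one hx.ne', ← Real.rpow_add hx,
        show α + (-α - 1 + 1) = 0 by ring, Real.rpow_zero]
    rw [this, ENNReal.ofReal_one]
  rw [hco, one_mul]

lemma fubini_indep {Ω : Type*} [MeasurableSpace Ω] (P : Measure Ω) [IsProbabilityMeasure P]
    {l d : ℕ} {R : Ω → ℝ} (hRm : Measurable R) {Θ : Ω → RPath l d} (hΘm : Measurable Θ)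
    (hindep : IndepFun R Θ P) {Φ : ℝ × RPath l d → ℝ≥0∞} (hΦ : Measurable Φ) :
    ∫⁻ ω, Φ (R ω, Θ ω) ∂P = ∫⁻ ω, ∫⁻ r, Φ (r, Θ ω) ∂(P.map R) ∂P := by
  have hmap : P.map (fun ω => (R ω, Θ ω)) = (P.map R).prod (P.map Θ) :=
    (indepFun_iff_map_prod_eq_prod_map_map hRm.aemeasurable hΘm.aemeasurable).mp hindep
  haveI : IsProbabilityMeasure (P.map R) := Measure.isProbabilityMeasure_map hRm.aemeasurable
  haveI : IsProbabilityMeasure (P.map Θ) := Measure.isProbabilityMeasure_map hΘm.aemeasurable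
  calc ∫⁻ ω, Φ (R ω, Θ ω) ∂P
      = ∫⁻ p, Φ p ∂(P.map (fun ω => (R ω, Θ ω))) := (lintegral_map hΦ (hRm.prodMk hΘm)).symm
    _ = ∫⁻ p, Φ p ∂((P.map R).prod (P.map Θ)) := by rw [hmap]
    _ = ∫⁻ g, ∫⁻ r, Φ (r, g) ∂(P.map R) ∂(P.map Θ) := lintegral_prod_symm' Φ hΦ
    _ = ∫⁻ ω, ∫⁻ r, Φ (r, Θ ω) ∂(P.map R) ∂P := lintegral_map hΦ.lintegral_prod_left' hΘm

/-- if `Θ` is a spectral tail RF and `R` is α-Pareto independent of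
`Θ`, then `Y = RΘ` satisfies `‖Y(0)‖ > 1` a.s., `S(Y) > 0` a.s., and the
fundamental tail identity. -/
theorem stmt15 {Ω : Type*} [MeasurableSpace Ω] (P : Measure Ω)
    [IsProbabilityMeasure P] (hPc : P.IsComplete)
    {l d : ℕ} (hl : 1 ≤ l) (hd : 1 ≤ d) (α : ℝ) (hα : 0 < α)
    (Θ : Ω → RPath l d) (hΘ : SpectralTail P α Θ)
    (R : Ω → ℝ) (hRm : Measurable R)
    (hRlaw : ∀ s : ℝ, 1 ≤ s → P {ω | s < R ω} = ENNReal.ofReal (s ^ (-α)))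
    (hindep : IndepFun R Θ P)
    (Y : Ω → RPath l d) (hYdef : Y = fun ω t => R ω • Θ ω t) :
    P {ω | 1 < ‖Y ω 0‖} = 1 ∧
    P {ω | 0 < Sfun α (Y ω)} = 1 ∧
    ∀ Γ : RPath l d → ℝ≥0∞, Measurable Γ → ∀ h : Tsp l, ∀ x : ℝ, 0 < x →
      (∫⁻ ω, Γ (fun t => x • shift h (Y ω) t) *
          (if 1 < x * ‖Y ω (-h)‖ then 1 else 0) ∂P) =
      ENNReal.ofReal (x ^ α) *
        ∫⁻ ω, Γ (Y ω) * (if x < ‖Y ω h‖ then 1 else 0) ∂P := by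
  obtain ⟨hΘjm, hΘ01, hΘS, hΘid⟩ := hΘ
  have hΘm : Measurable Θ :=
    measurable_pi_lambda _ fun t => hΘjm.comp (measurable_id.prodMk measurable_const)
  have hY' : ∀ ω t, Y ω t = R ω • Θ ω t := fun ω t => by rw [hYdef]
  have hR1 : ∀ᵐ ω ∂P, 1 < R ω := by
    have hset : P {ω | 1 < R ω} = 1 := by
      rw [hRlaw 1 le_rfl, Real.one_rpow, ENNReal.ofReal_one]
    exact ae_of_prob_eq_one P (S := {ω | 1 < R ω})
      (measurableSet_lt measurable_const hRm) hset
  have hΘ0ae : ∀ᵐ ω ∂P, ‖Θ ω 0‖ = 1 := by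
    refine ae_of_prob_eq_one P ?_ hΘ01
    exact measurableSet_eq_fun (((measurable_pi_apply 0).comp hΘm).norm) measurable_const
  have hSae : ∀ᵐ ω ∂P, 0 < Sfun α (Θ ω) := by
    refine ae_of_prob_eq_one P ?_ hΘS
    have hms : Measurable fun ω => Sfun α (Θ ω) :=
      Measurable.lintegral_prod_right'
        (f := fun p : Ω × Tsp l => ENNReal.ofReal (‖Θ p.1 p.2‖ ^ α))
        (ENNReal.measurable_ofReal.comp (hΘjm.norm.pow_const α))
    have hc : {ω | 0 < Sfun α (Θ ω)} = ((fun ω => Sfun α (Θ ω)) ⁻¹' {0})ᶜ := by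
      ext ω; simp [pos_iff_ne_zero]
    show MeasurableSet {ω | 0 < Sfun α (Θ ω)}
    rw [hc]
    exact (hms (measurableSet_singleton 0)).compl
  refine ⟨?_, ?_, ?_⟩
  · refine prob_eq_one_of_ae P ?_
    filter_upwards [hR1, hΘ0ae] with ω h1 h2
    show 1 < ‖Y ω 0‖
    rw [hY', norm_smul, Real.norm_of_nonneg (by linarith), h2, mul_one]
    exact h1
  · refine prob_eq_one_of_ae P ?_
    filter_upwards [hR1, hSae] with ω h1 h2
    show 0 < Sfun α (Y ω)
    have hR0 : (0:ℝ) < R ω := lt_trans one_pos h1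
    have hcalc : Sfun α (Y ω) = ENNReal.ofReal (R ω ^ α) * Sfun α (Θ ω) := by
      unfold Sfun
      rw [← lintegral_const_mul' _ _ ENNReal.ofReal_ne_top]
      refine lintegral_congr fun t => ?_
      rw [hY', norm_smul, Real.norm_of_nonneg hR0.le,
        Real.mul_rpow hR0.le (norm_nonneg _),
        ENNReal.ofReal_mul (Real.rpow_nonneg hR0.le _)]
    rw [hcalc]
    exact ENNReal.mul_pos
      (by rw [Ne, ENNReal.ofReal_eq_zero, not_le]; exact Real.rpow_pos_of_pos hR0 α) h2.ne'
  · intro Γ hΓ h x hx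
    have hνlaw : P.map R = paretoM α := pareto_law P hα hRm hRlaw
    set Φ₁ : ℝ × RPath l d → ℝ≥0∞ := fun p =>
      Γ (fun t => (x*p.1) • p.2 (t - h)) * (if 1 < x*p.1*‖p.2 (-h)‖ then 1 else 0) with hΦ₁
    set Φ₂ : ℝ × RPath l d → ℝ≥0∞ := fun p =>
      Γ (fun t => p.1 • p.2 t) * (if x < p.1*‖p.2 h‖ then 1 else 0) with hΦ₂
    have hΦ₁m : Measurable Φ₁ := by
      rw [hΦ₁]
      have harg : Measurable fun p : ℝ × RPath l d => (fun t => (x*p.1) • p.2 (t - h) : RPath l d) :=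
        measurable_pi_lambda _ fun t =>
          (measurable_fst.const_mul x).smul ((measurable_pi_apply (t - h)).comp measurable_snd)
      have h1 : Measurable fun p : ℝ × RPath l d => x*p.1*‖p.2 (-h)‖ :=
        (measurable_fst.const_mul x).mul ((measurable_pi_apply (-h)).comp measurable_snd).norm
      exact (hΓ.comp harg).mul
        (Measurable.ite (measurableSet_lt measurable_const h1) measurable_const measurable_const)
    have hΦ₂m : Measurable Φ₂ := by
      rw [hΦ₂]
      have harg : Measurable fun p : ℝ × RPath l d => (fun t => p.1 • p.2 t : RPath l d) :=
        measurable_pi_lambda _ fun t =>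
          measurable_fst.smul ((measurable_pi_apply t).comp measurable_snd)
      have h1 : Measurable fun p : ℝ × RPath l d => p.1*‖p.2 h‖ :=
        measurable_fst.mul ((measurable_pi_apply h).comp measurable_snd).norm
      exact (hΓ.comp harg).mul
        (Measurable.ite (measurableSet_lt measurable_const h1) measurable_const measurable_const)
    have hinner1 : ∀ᵐ ω ∂P, ∫⁻ r, Φ₁ (r, Θ ω) ∂(P.map R)
        = (if ‖Θ ω (-h)‖ ≠ 0 then 1 else 0) * Gam0 α x h Γ (shift h (Θ ω)) := by
      filter_upwards [hΘ0ae] with ω h2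
      have hψm : Measurable fun r => Φ₁ (r, Θ ω) :=
        hΦ₁m.comp (measurable_id.prodMk measurable_const)
      rw [hνlaw, pareto_lintegral hψm, ← stepC α h Γ (Θ ω) h2]
    have hinner2 : ∀ᵐ ω ∂P, ENNReal.ofReal (‖Θ ω h‖ ^ α) * Gam0 α x h Γ (Θ ω)
        = ENNReal.ofReal (x ^ α) * ∫⁻ r, Φ₂ (r, Θ ω) ∂(P.map R) := by
      filter_upwards [hΘ0ae] with ω h2
      have hψm : Measurable fun r => Φ₂ (r, Θ ω) :=
        hΦ₂m.comp (measurable_id.prodMk measurable_const)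
      rw [hνlaw, pareto_lintegral hψm, stepD hα hx h Γ (Θ ω) h2]
    calc ∫⁻ ω, Γ (fun t => x • shift h (Y ω) t) *
            (if 1 < x * ‖Y ω (-h)‖ then 1 else 0) ∂P
        = ∫⁻ ω, Φ₁ (R ω, Θ ω) ∂P := by
          refine lintegral_congr_ae ?_
          filter_upwards [hR1] with ω h1
          have hR0 : (0:ℝ) < R ω := lt_trans one_pos h1
          have e1 : (fun t => x • shift h (Y ω) t) = fun t => (x * R ω) • Θ ω (t - h) := by
            funext t
            simp only [shift, hY', smul_smul]
          have e2 : x * ‖Y ω (-h)‖ = x * R ω * ‖Θ ω (-h)‖ := by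
            rw [hY', norm_smul, Real.norm_of_nonneg hR0.le]; ring
          rw [e1, e2, hΦ₁]
      _ = ∫⁻ ω, ∫⁻ r, Φ₁ (r, Θ ω) ∂(P.map R) ∂P :=
          fubini_indep P hRm hΘm hindep hΦ₁m
      _ = ∫⁻ ω, (if ‖Θ ω (-h)‖ ≠ 0 then 1 else 0) * Gam0 α x h Γ (shift h (Θ ω)) ∂P :=
          lintegral_congr_ae hinner1
      _ = ∫⁻ ω, ENNReal.ofReal (‖Θ ω h‖ ^ α) * Gam0 α x h Γ (Θ ω) ∂P :=
          (hΘid (Gam0 α x h Γ) (Gam0_hom hα hx h hΓ) h).symm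
      _ = ∫⁻ ω, ENNReal.ofReal (x ^ α) * ∫⁻ r, Φ₂ (r, Θ ω) ∂(P.map R) ∂P :=
          lintegral_congr_ae hinner2
      _ = ENNReal.ofReal (x ^ α) * ∫⁻ ω, ∫⁻ r, Φ₂ (r, Θ ω) ∂(P.map R) ∂P :=
          lintegral_const_mul' _ _ ENNReal.ofReal_ne_top
      _ = ENNReal.ofReal (x ^ α) * ∫⁻ ω, Φ₂ (R ω, Θ ω) ∂P := by
          rw [← fubini_indep P hRm hΘm hindep hΦ₂m]
      _ = ENNReal.ofReal (x ^ α) * ∫⁻ ω, Γ (Y ω) * (if x < ‖Y ω h‖ then 1 else 0) ∂P := by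
          congr 1
          refine lintegral_congr_ae ?_
          filter_upwards [hR1] with ω h1
          have hR0 : (0:ℝ) < R ω := lt_trans one_pos h1
          have e1 : Y ω = fun t => R ω • Θ ω t := funext fun t => hY' ω t
          have e2 : ‖Y ω h‖ = R ω * ‖Θ ω h‖ := by
            rw [hY', norm_smul, Real.norm_of_nonneg hR0.le]
          rw [hΦ₂, e2]
          simp only [e1]
end
end

section
/- Let Y be a RF on a complete probability space such that ‖Y(0)‖ > 1 almost surely, S(Y) > 0 almost surely, and for every product-measurable Γ : D → [0, ∞], every h ∈ T and every x > 0, E[Γ(x B^h Y) 1{x ‖Y(−h)‖ > 1}] = x^α E[Γ(Y) 1{‖Y(h)‖ > x}]. Then ‖Y(0)‖ is an α-Pareto random variable, ‖Y(0)‖ is independent of the RF Θ = Y/‖Y(0)‖, and Θ is a spectral tail RF. -/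
open MeasureTheory ProbabilityTheory Filter
open scoped ENNReal Topology

noncomputable section

lemma lintA {α : ℝ} (hα : 0 < α) {r : ℝ} (hr : 0 ≤ r) :
    ∫⁻ x in Set.Ioi (0:ℝ), ENNReal.ofReal (α * x ^ (-α-1)) * (if 1 < x * r then 1 else 0)
      = ENNReal.ofReal (r ^ α) := by
  rcases hr.eq_or_lt with h0 | hr
  · subst h0
    simp only [mul_zero]
    rw [if_neg (by norm_num)]
    simp [Real.zero_rpow hα.ne']
  · have hc : 0 < 1 / r := by positivity
    have hset : ∀ x : ℝ, (1 < x * r) ↔ x ∈ Set.Ioi (1/r) := fun x => by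
      rw [Set.mem_Ioi, div_lt_iff₀ hr]
    have : ∀ x : ℝ, ENNReal.ofReal (α * x ^ (-α-1)) * (if 1 < x * r then 1 else 0)
        = (Set.Ioi (1/r)).indicator (fun x => ENNReal.ofReal (α * x ^ (-α-1))) x := by
      intro x
      by_cases h : 1 < x * r
      · rw [if_pos h, Set.indicator_of_mem ((hset x).1 h), mul_one]
      · rw [if_neg h, Set.indicator_of_notMem (fun hx => h ((hset x).2 hx)), mul_zero]
    simp_rw [this]
    rw [lintegral_indicator measurableSet_Ioi _, Measure.restrict_restrict measurableSet_Ioi,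
      show Set.Ioi (1/r) ∩ Set.Ioi (0:ℝ) = Set.Ioi (1/r) from
        Set.inter_eq_self_of_subset_left (fun x hx => lt_trans hc hx)]
    have hint : IntegrableOn (fun x => α * x ^ (-α-1)) (Set.Ioi (1/r)) :=
      (integrableOn_Ioi_rpow_of_lt (by linarith) hc).const_mul α
    rw [← MeasureTheory.ofReal_integral_eq_lintegral_ofReal hint]
    · rw [MeasureTheory.integral_const_mul, integral_Ioi_rpow_of_lt (by linarith) hc]
      have : -α - 1 + 1 = -α := by ring
      rw [this]
      congr 1
      rw [one_div, Real.inv_rpow hr.le, Real.rpow_neg hr.le]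
      field_simp
    · filter_upwards [ae_restrict_mem measurableSet_Ioi] with x hx
      have : (0:ℝ) < x := lt_trans hc hx
      positivity

lemma lintB {α : ℝ} (hα : 0 < α) {s : ℝ} (hs : 0 ≤ s) :
    ∫⁻ x in Set.Ioi (0:ℝ), ENNReal.ofReal (α * x ^ (α-1)) * (if x < s then 1 else 0)
      = ENNReal.ofReal (s ^ α) := by
  have : ∀ x : ℝ, ENNReal.ofReal (α * x ^ (α-1)) * (if x < s then 1 else 0)
      = (Set.Iio s).indicator (fun x => ENNReal.ofReal (α * x ^ (α-1))) x := by
    intro x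
    by_cases h : x < s
    · rw [if_pos h, Set.indicator_of_mem (show x ∈ Set.Iio s from h) _, mul_one]
    · rw [if_neg h, Set.indicator_of_notMem (show x ∉ Set.Iio s from h) _, mul_zero]
  simp_rw [this]
  rw [lintegral_indicator measurableSet_Iio _, Measure.restrict_restrict measurableSet_Iio]
  have hIoo : Set.Iio s ∩ Set.Ioi (0:ℝ) = Set.Ioo 0 s := by
    ext x; simp [Set.mem_Ioo, and_comm]
  rw [hIoo, Measure.restrict_congr_set Ioo_ae_eq_Ioc]
  have hint : IntegrableOn (fun x => α * x ^ (α-1)) (Set.Ioc 0 s) :=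
    ((intervalIntegral.intervalIntegrable_rpow' (by linarith)).1).const_mul α
  rw [← MeasureTheory.ofReal_integral_eq_lintegral_ofReal hint]
  · congr 1
    rw [MeasureTheory.integral_const_mul, ← _root_.intervalIntegral.integral_of_le hs,
      integral_rpow (Or.inl (by linarith))]
    have : α - 1 + 1 = α := by ring
    rw [this, Real.zero_rpow hα.ne']
    field_simp
    rw [sub_zero]
  · filter_upwards [ae_restrict_mem measurableSet_Ioc] with x hx
    have : (0:ℝ) < x := hx.1
    positivity

/-- if `Y` satisfies the tail identity with `‖Y(0)‖ > 1` a.s. and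
`S(Y) > 0` a.s., then `‖Y(0)‖` is α-Pareto, independent of `Θ = Y/‖Y(0)‖`, and
`Θ` is a spectral tail RF. -/
theorem stmt16 {Ω : Type*} [MeasurableSpace Ω] (P : Measure Ω)
    [IsProbabilityMeasure P] (hPc : P.IsComplete)
    {l d : ℕ} (hl : 1 ≤ l) (hd : 1 ≤ d) (α : ℝ) (hα : 0 < α)
    (Y : Ω → RPath l d) (hYm : JointlyMeasurable Y)
    (h0 : P {ω | 1 < ‖Y ω 0‖} = 1)
    (hS : P {ω | 0 < Sfun α (Y ω)} = 1)
    (hid : ∀ Γ : RPath l d → ℝ≥0∞, Measurable Γ → ∀ h : Tsp l, ∀ x : ℝ, 0 < x →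
      (∫⁻ ω, Γ (fun t => x • shift h (Y ω) t) *
          (if 1 < x * ‖Y ω (-h)‖ then 1 else 0) ∂P) =
      ENNReal.ofReal (x ^ α) *
        ∫⁻ ω, Γ (Y ω) * (if x < ‖Y ω h‖ then 1 else 0) ∂P)
    (Θ : Ω → RPath l d) (hΘdef : Θ = fun ω t => ‖Y ω 0‖⁻¹ • Y ω t) :
    (∀ s : ℝ, 1 ≤ s → P {ω | s < ‖Y ω 0‖} = ENNReal.ofReal (s ^ (-α))) ∧
    IndepFun (fun ω => ‖Y ω 0‖) Θ P ∧
    SpectralTail P α Θ := by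
  subst hΘdef
  -- basic measurability
  have mYt : ∀ t : Tsp l, Measurable fun ω => Y ω t :=
    fun t => hYm.comp (measurable_id.prodMk measurable_const)
  have mN : ∀ t : Tsp l, Measurable fun ω => ‖Y ω t‖ := fun t => (mYt t).norm
  have mshY : ∀ h : Tsp l, Measurable fun ω => shift h (Y ω) :=
    fun h => measurable_pi_iff.2 fun t => mYt (t - h)
  have mY : Measurable Y := measurable_pi_iff.2 mYt
  -- a.e. facts
  have ae1 : ∀ᵐ ω ∂P, 1 < ‖Y ω 0‖ := by
    rw [ae_iff]
    have hcompl : {ω | ¬ 1 < ‖Y ω 0‖} = {ω | 1 < ‖Y ω 0‖}ᶜ := rfl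
    rw [hcompl, measure_compl (measurableSet_lt measurable_const (mN 0)) (measure_ne_top P _),
      h0, measure_univ, tsub_self]
  have probOf : ∀ {q : Ω → Prop}, (∀ᵐ ω ∂P, q ω) → P {ω | q ω} = 1 := by
    intro q hq
    have h2 : {ω | q ω} =ᵐ[P] (Set.univ : Set Ω) :=
      Filter.eventuallyEq_univ.2 hq
    rw [measure_congr h2, measure_univ]
  -- indicator integrals
  have lint_ind : ∀ (q : Ω → Prop) (_ : DecidablePred q), MeasurableSet {ω | q ω} →
      (∫⁻ ω, (if q ω then (1:ℝ≥0∞) else 0) ∂P) = P {ω | q ω} := by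
    intro q inst hq
    rw [← lintegral_indicator_one hq]
    refine lintegral_congr fun ω => ?_
    by_cases h : q ω
    · rw [if_pos h, Set.indicator_of_mem (show ω ∈ {ω' | q ω'} from h)]; rfl
    · rw [if_neg h, Set.indicator_of_notMem (show ω ∉ {ω' | q ω'} from h)]
  -- Part 1 : Pareto
  have pareto : ∀ s : ℝ, 1 ≤ s → P {ω | s < ‖Y ω 0‖} = ENNReal.ofReal (s ^ (-α)) := by
    intro s hs
    have hs0 : (0:ℝ) < s := lt_of_lt_of_le one_pos hs
    have key := hid (fun _ => 1) measurable_const 0 s hs0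
    simp only [neg_zero, one_mul] at key
    rw [lint_ind _ _ (measurableSet_lt measurable_const ((mN 0).const_mul s)),
      lint_ind _ _ (measurableSet_lt measurable_const (mN 0))] at key
    have h1 : P {ω | 1 < s * ‖Y ω 0‖} = 1 := by
      refine le_antisymm prob_le_one ?_
      rw [← h0]
      refine measure_mono fun ω hω => ?_
      have hω' : 1 < ‖Y ω 0‖ := hω
      calc (1:ℝ) < ‖Y ω 0‖ := hω'
        _ = 1 * ‖Y ω 0‖ := (one_mul _).symm
        _ ≤ s * ‖Y ω 0‖ := by
            exact mul_le_mul_of_nonneg_right hs (norm_nonneg _)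
    rw [h1] at key
    have hne0 : ENNReal.ofReal (s ^ α) ≠ 0 :=
      ne_of_gt (ENNReal.ofReal_pos.2 (Real.rpow_pos_of_pos hs0 α))
    have := congrArg (fun z => (ENNReal.ofReal (s ^ α))⁻¹ * z) key
    simp only [mul_one, ← mul_assoc, ENNReal.inv_mul_cancel hne0 ENNReal.ofReal_ne_top,
      one_mul] at this
    rw [← this, ← ENNReal.ofReal_inv_of_pos (Real.rpow_pos_of_pos hs0 α), ← Real.rpow_neg hs0.le]
  refine ⟨pareto, ?_, ?_⟩
  · -- Independence
    classical
    set Θf : Ω → RPath l d := fun ω t => ‖Y ω 0‖⁻¹ • Y ω t with hΘf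
    have mΘ : Measurable Θf := measurable_pi_iff.2 fun t => ((mN 0).inv).smul (mYt t)
    set Tm : RPath l d → RPath l d := fun f t => ‖f 0‖⁻¹ • f t with hTm
    have mTm : Measurable Tm :=
      measurable_pi_iff.2 fun t => ((measurable_pi_apply 0).norm.inv).smul (measurable_pi_apply t)
    have hconull : ∀ {A : Set Ω}, MeasurableSet A → P A = 1 → ∀ B : Set Ω, P (A ∩ B) = P B := by
      intro A hA h1 B
      have hAc : P Aᶜ = 0 := by
        rw [measure_compl hA (measure_ne_top _ _), h1, measure_univ, tsub_self]
      rw [Set.inter_comm]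
      exact measure_inter_conull hAc
    have main : ∀ (s : ℝ) (C : Set (RPath l d)), MeasurableSet C →
        P ({ω | s < ‖Y ω 0‖} ∩ Θf ⁻¹' C) = P {ω | s < ‖Y ω 0‖} * P (Θf ⁻¹' C) := by
      intro s C hC
      by_cases hs : 1 ≤ s
      · have hs0 : (0:ℝ) < s := lt_of_lt_of_le one_pos hs
        set ΓB : RPath l d → ℝ≥0∞ := fun f => if Tm f ∈ C then 1 else 0 with hΓB
        have mΓB : Measurable ΓB := Measurable.ite (mTm hC) measurable_const measurable_const
        have key := hid ΓB mΓB 0 s hs0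
        simp only [neg_zero] at key
        have scale : ∀ ω, Tm (fun u => s • shift 0 (Y ω) u) = Tm (Y ω) := by
          intro ω; funext t
          show ‖s • Y ω (0 - 0)‖⁻¹ • (s • Y ω (t - 0)) = ‖Y ω 0‖⁻¹ • Y ω t
          rw [sub_zero, sub_zero, norm_smul, Real.norm_eq_abs, abs_of_pos hs0, smul_smul, mul_inv]
          congr 1
          rw [mul_comm (s⁻¹), mul_assoc, inv_mul_cancel₀ hs0.ne', mul_one]
        have hTmY : ∀ ω, Tm (Y ω) = Θf ω := fun ω => rfl
        have lhs_eq : (∫⁻ ω, ΓB (fun t => s • shift 0 (Y ω) t) *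
              (if 1 < s * ‖Y ω 0‖ then 1 else 0) ∂P)
            = ∫⁻ ω, (if (Θf ω ∈ C ∧ 1 < s * ‖Y ω 0‖) then (1:ℝ≥0∞) else 0) ∂P := by
          refine lintegral_congr fun ω => ?_
          show (if Tm (fun t => s • shift 0 (Y ω) t) ∈ C then (1:ℝ≥0∞) else 0) * _ = _
          rw [scale ω, hTmY ω]
          by_cases h1 : Θf ω ∈ C <;> by_cases h2 : 1 < s * ‖Y ω 0‖ <;>
            simp [h1, h2]
        have rhs_eq : (∫⁻ ω, ΓB (Y ω) * (if s < ‖Y ω 0‖ then 1 else 0) ∂P)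
            = ∫⁻ ω, (if (Θf ω ∈ C ∧ s < ‖Y ω 0‖) then (1:ℝ≥0∞) else 0) ∂P := by
          refine lintegral_congr fun ω => ?_
          show (if Tm (Y ω) ∈ C then (1:ℝ≥0∞) else 0) * _ = _
          rw [hTmY ω]
          by_cases h1 : Θf ω ∈ C <;> by_cases h2 : s < ‖Y ω 0‖ <;> simp [h1, h2]
        rw [lhs_eq, rhs_eq,
          lint_ind (fun ω => Θf ω ∈ C ∧ 1 < s * ‖Y ω 0‖) _ ((mΘ hC).inter
            (measurableSet_lt measurable_const (measurable_const.mul (mN 0)))),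
          lint_ind (fun ω => Θf ω ∈ C ∧ s < ‖Y ω 0‖) _ ((mΘ hC).inter
            (measurableSet_lt measurable_const (mN 0)))] at key
        have hsplit1 : {ω | Θf ω ∈ C ∧ 1 < s * ‖Y ω 0‖}
            = {ω | 1 < s * ‖Y ω 0‖} ∩ (Θf ⁻¹' C) := by
          ext ω; exact ⟨fun h => ⟨h.2, h.1⟩, fun h => ⟨h.2, h.1⟩⟩
        have hsplit2 : {ω | Θf ω ∈ C ∧ s < ‖Y ω 0‖}
            = {ω | s < ‖Y ω 0‖} ∩ (Θf ⁻¹' C) := by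
          ext ω; exact ⟨fun h => ⟨h.2, h.1⟩, fun h => ⟨h.2, h.1⟩⟩
        have hP1 : P {ω | 1 < s * ‖Y ω 0‖} = 1 := by
          refine le_antisymm prob_le_one ?_
          rw [← h0]
          refine measure_mono fun ω hω => ?_
          have hω' : 1 < ‖Y ω 0‖ := hω
          calc (1:ℝ) < ‖Y ω 0‖ := hω'
            _ = 1 * ‖Y ω 0‖ := (one_mul _).symm
            _ ≤ s * ‖Y ω 0‖ := mul_le_mul_of_nonneg_right hs (norm_nonneg _)
        rw [hsplit1, hsplit2,
          hconull (measurableSet_lt measurable_const ((mN 0).const_mul s)) hP1] at key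
        -- key : P (Θf ⁻¹' C) = ofReal (s^α) * P ({s < ‖Y0‖} ∩ Θf⁻¹' C)
        have hne0 : ENNReal.ofReal (s ^ α) ≠ 0 :=
          ne_of_gt (ENNReal.ofReal_pos.2 (Real.rpow_pos_of_pos hs0 α))
        have hsolve := congrArg (fun z => (ENNReal.ofReal (s ^ α))⁻¹ * z) key
        simp only [← mul_assoc, ENNReal.inv_mul_cancel hne0 ENNReal.ofReal_ne_top,
          one_mul] at hsolve
        rw [← hsolve, pareto s hs, ← ENNReal.ofReal_inv_of_pos (Real.rpow_pos_of_pos hs0 α),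
          ← Real.rpow_neg hs0.le]
      · push_neg at hs
        have hPs : P {ω | s < ‖Y ω 0‖} = 1 := by
          refine le_antisymm prob_le_one ?_
          rw [← h0]
          exact measure_mono fun ω hω => lt_trans hs hω
        rw [hconull (measurableSet_lt measurable_const (mN 0)) hPs, hPs, one_mul]
    -- assemble
    have hp1 : IsPiSystem {A : Set Ω | ∃ s : ℝ, (fun ω => ‖Y ω 0‖) ⁻¹' (Set.Ioi s) = A} := by
      rintro A ⟨s, rfl⟩ B ⟨t, rfl⟩ -
      exact ⟨s ⊔ t, by rw [← Set.preimage_inter, Set.Ioi_inter_Ioi]⟩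
    have hp2 : IsPiSystem {A : Set Ω | ∃ B : Set (RPath l d), MeasurableSet B ∧ Θf ⁻¹' B = A} := by
      rintro A ⟨B1, hB1, rfl⟩ A2 ⟨B2, hB2, rfl⟩ -
      exact ⟨B1 ∩ B2, hB1.inter hB2, by rw [Set.preimage_inter]⟩
    have hpm1 : MeasurableSpace.comap (fun ω => ‖Y ω 0‖) inferInstance
        = MeasurableSpace.generateFrom
          {A : Set Ω | ∃ s : ℝ, (fun ω => ‖Y ω 0‖) ⁻¹' (Set.Ioi s) = A} := by
      conv_lhs => rw [show (inferInstance : MeasurableSpace ℝ) = borel ℝ from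
        BorelSpace.measurable_eq, borel_eq_generateFrom_Ioi, MeasurableSpace.comap_generateFrom]
      congr 1
      ext A
      constructor
      · rintro ⟨B, ⟨s, rfl⟩, rfl⟩; exact ⟨s, rfl⟩
      · rintro ⟨s, rfl⟩; exact ⟨Set.Ioi s, ⟨s, rfl⟩, rfl⟩
    have hpm2 : MeasurableSpace.comap Θf inferInstance
        = MeasurableSpace.generateFrom
          {A : Set Ω | ∃ B : Set (RPath l d), MeasurableSet B ∧ Θf ⁻¹' B = A} := by
      exact MeasurableSpace.comap_eq_generateFrom _ _
    have hyp : ProbabilityTheory.IndepSets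
        {A : Set Ω | ∃ s : ℝ, (fun ω => ‖Y ω 0‖) ⁻¹' (Set.Ioi s) = A}
        {A : Set Ω | ∃ B : Set (RPath l d), MeasurableSet B ∧ Θf ⁻¹' B = A} P := by
      rw [ProbabilityTheory.IndepSets_iff]
      rintro A1 A2 ⟨s, rfl⟩ ⟨B, hB, rfl⟩
      exact main s B hB
    exact ProbabilityTheory.IndepSets.indep ((mN 0).comap_le) (mΘ.comap_le) hp1 hp2 hpm1 hpm2 hyp
  · -- SpectralTail
    classical
    have mrp : Measurable fun r : ℝ => r ^ (-α) := by fun_prop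
    refine ⟨?_, ?_, ?_, ?_⟩
    · -- joint measurability
      exact (((mN 0).comp measurable_fst).inv).smul hYm
    · -- norm at 0 equals 1
      refine probOf (ae1.mono fun ω hω => ?_)
      have hc : (0:ℝ) < ‖Y ω 0‖ := lt_trans one_pos hω
      show ‖‖Y ω 0‖⁻¹ • Y ω 0‖ = 1
      rw [norm_smul, Real.norm_eq_abs, abs_of_pos (inv_pos.2 hc), inv_mul_cancel₀ hc.ne']
    · -- positivity of Sfun
      have mSf : Measurable fun ω => Sfun α (Y ω) := by
        have : Measurable fun p : Ω × Tsp l => ENNReal.ofReal (‖Y p.1 p.2‖ ^ α) := by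
          have mr : Measurable fun r : ℝ => r ^ α := by fun_prop
          exact ((mr.comp hYm.norm)).ennreal_ofReal
        exact this.lintegral_prod_right'
      have aeS : ∀ᵐ ω ∂P, 0 < Sfun α (Y ω) := by
        rw [ae_iff]
        have hcompl : {ω | ¬ 0 < Sfun α (Y ω)} = {ω | 0 < Sfun α (Y ω)}ᶜ := rfl
        rw [hcompl, measure_compl (measurableSet_lt measurable_const mSf)
          (measure_ne_top P _), hS, measure_univ, tsub_self]
      refine probOf ((ae1.and aeS).mono fun ω hω => ?_)
      obtain ⟨h1, h2⟩ := hω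
      have hc : (0:ℝ) < ‖Y ω 0‖ := lt_trans one_pos h1
      have hci : (0:ℝ) < ‖Y ω 0‖⁻¹ := inv_pos.2 hc
      show 0 < Sfun α (fun t => ‖Y ω 0‖⁻¹ • Y ω t)
      have hSeq : Sfun α (fun t => ‖Y ω 0‖⁻¹ • Y ω t)
          = ENNReal.ofReal (‖Y ω 0‖⁻¹ ^ α) * Sfun α (Y ω) := by
        rw [Sfun, Sfun, ← lintegral_const_mul' _ _ ENNReal.ofReal_ne_top]
        refine lintegral_congr fun t => ?_
        rw [norm_smul, Real.norm_eq_abs, abs_of_pos hci,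
          Real.mul_rpow hci.le (norm_nonneg _),
          ENNReal.ofReal_mul (Real.rpow_nonneg hci.le _)]
      rw [hSeq]
      exact ENNReal.mul_pos
        (ne_of_gt (ENNReal.ofReal_pos.2 (Real.rpow_pos_of_pos hci α))) h2.ne'
    · -- the time-change identity
      intro Γ hΓ h
      obtain ⟨mΓ, homΓ⟩ := hΓ
      have claim1 : ∀ x : ℝ, 0 < x →
          (∫⁻ ω, Γ (shift h (Y ω)) * ENNReal.ofReal (‖Y ω (-h)‖ ^ (-α)) *
            (if 1 < x * ‖Y ω (-h)‖ then 1 else 0) ∂P)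
          = ENNReal.ofReal (x ^ (α + α)) *
            ∫⁻ ω, Γ (Y ω) * ENNReal.ofReal (‖Y ω 0‖ ^ (-α)) *
              (if x < ‖Y ω h‖ then 1 else 0) ∂P := by
        intro x hx
        have mΓx : Measurable fun f : RPath l d => Γ f * ENNReal.ofReal (‖f 0‖ ^ (-α)) :=
          mΓ.mul ((mrp.comp (measurable_pi_apply 0).norm).ennreal_ofReal)
        have base := hid _ mΓx h x hx
        have lhs_eq : ∀ ω : Ω,
            Γ (fun t => x • shift h (Y ω) t) *
              ENNReal.ofReal (‖(fun t => x • shift h (Y ω) t) 0‖ ^ (-α)) *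
              (if 1 < x * ‖Y ω (-h)‖ then 1 else 0)
            = ENNReal.ofReal (x ^ (-α)) *
              (Γ (shift h (Y ω)) * ENNReal.ofReal (‖Y ω (-h)‖ ^ (-α)) *
                (if 1 < x * ‖Y ω (-h)‖ then 1 else 0)) := by
          intro ω
          have e0 : (fun t => x • shift h (Y ω) t) 0 = x • Y ω (-h) := by
            show x • Y ω (0 - h) = x • Y ω (-h)
            rw [zero_sub]
          rw [homΓ x hx, Real.rpow_zero, ENNReal.ofReal_one, one_mul, e0, norm_smul,
            Real.norm_eq_abs, abs_of_pos hx, Real.mul_rpow hx.le (norm_nonneg _),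
            ENNReal.ofReal_mul (Real.rpow_nonneg hx.le _)]
          ring
        have base2 : ENNReal.ofReal (x ^ (-α)) *
            (∫⁻ ω, Γ (shift h (Y ω)) * ENNReal.ofReal (‖Y ω (-h)‖ ^ (-α)) *
              (if 1 < x * ‖Y ω (-h)‖ then 1 else 0) ∂P)
            = ENNReal.ofReal (x ^ α) *
              ∫⁻ ω, Γ (Y ω) * ENNReal.ofReal (‖Y ω 0‖ ^ (-α)) *
                (if x < ‖Y ω h‖ then 1 else 0) ∂P := by
          calc ENNReal.ofReal (x ^ (-α)) *
              (∫⁻ ω, Γ (shift h (Y ω)) * ENNReal.ofReal (‖Y ω (-h)‖ ^ (-α)) *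
                (if 1 < x * ‖Y ω (-h)‖ then 1 else 0) ∂P)
              = ∫⁻ ω, ENNReal.ofReal (x ^ (-α)) *
                  (Γ (shift h (Y ω)) * ENNReal.ofReal (‖Y ω (-h)‖ ^ (-α)) *
                    (if 1 < x * ‖Y ω (-h)‖ then 1 else 0)) ∂P :=
                (lintegral_const_mul' _ _ ENNReal.ofReal_ne_top).symm
            _ = ∫⁻ ω, Γ (fun t => x • shift h (Y ω) t) *
                  ENNReal.ofReal (‖(fun t => x • shift h (Y ω) t) 0‖ ^ (-α)) *
                  (if 1 < x * ‖Y ω (-h)‖ then 1 else 0) ∂P :=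
                lintegral_congr fun ω => (lhs_eq ω).symm
            _ = ENNReal.ofReal (x ^ α) *
                ∫⁻ ω, Γ (Y ω) * ENNReal.ofReal (‖Y ω 0‖ ^ (-α)) *
                  (if x < ‖Y ω h‖ then 1 else 0) ∂P := base
        have hxx : ENNReal.ofReal (x ^ α) * ENNReal.ofReal (x ^ (-α)) = 1 := by
          rw [← ENNReal.ofReal_mul (Real.rpow_nonneg hx.le _), ← Real.rpow_add hx]
          simp
        have hxx2 : ENNReal.ofReal (x ^ α) * ENNReal.ofReal (x ^ α)
            = ENNReal.ofReal (x ^ (α + α)) := by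
          rw [← ENNReal.ofReal_mul (Real.rpow_nonneg hx.le _), ← Real.rpow_add hx]
        have hmul := congrArg (fun z => ENNReal.ofReal (x ^ α) * z) base2
        simp only [← mul_assoc, hxx, hxx2, one_mul] at hmul
        exact hmul
      -- measurability of double integrands
      have indm : MeasurableSet {p : ℝ × Ω | 1 < p.1 * ‖Y p.2 (-h)‖} :=
        measurableSet_lt measurable_const (measurable_fst.mul ((mN (-h)).comp measurable_snd))
      have indm2 : MeasurableSet {p : ℝ × Ω | p.1 < ‖Y p.2 h‖} :=
        measurableSet_lt measurable_fst ((mN h).comp measurable_snd)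
      have mw1 : Measurable fun x : ℝ => ENNReal.ofReal (α * x ^ (-α-1)) := by fun_prop
      have mw2 : Measurable fun x : ℝ => ENNReal.ofReal (α * x ^ (α-1)) := by fun_prop
      have mg : Measurable fun p : ℝ × Ω =>
          ENNReal.ofReal (α * p.1 ^ (-α-1)) *
          (Γ (shift h (Y p.2)) * ENNReal.ofReal (‖Y p.2 (-h)‖ ^ (-α)) *
            (if 1 < p.1 * ‖Y p.2 (-h)‖ then 1 else 0)) :=
        (mw1.comp measurable_fst).mul
          ((((mΓ.comp (mshY h)).comp measurable_snd).mul
            (((mrp.comp (mN (-h))).ennreal_ofReal).comp measurable_snd)).mul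
            (Measurable.ite indm measurable_const measurable_const))
      have mg2 : Measurable fun p : ℝ × Ω =>
          ENNReal.ofReal (α * p.1 ^ (α-1)) *
          (Γ (Y p.2) * ENNReal.ofReal (‖Y p.2 0‖ ^ (-α)) *
            (if p.1 < ‖Y p.2 h‖ then 1 else 0)) :=
        (mw2.comp measurable_fst).mul
          ((((mΓ.comp mY).comp measurable_snd).mul
            (((mrp.comp (mN 0)).ennreal_ofReal).comp measurable_snd)).mul
            (Measurable.ite indm2 measurable_const measurable_const))
      have swapL :
          (∫⁻ x in Set.Ioi (0:ℝ), ENNReal.ofReal (α * x ^ (-α-1)) *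
            (∫⁻ ω, Γ (shift h (Y ω)) * ENNReal.ofReal (‖Y ω (-h)‖ ^ (-α)) *
              (if 1 < x * ‖Y ω (-h)‖ then 1 else 0) ∂P))
          = ∫⁻ ω, Γ (shift h (Y ω)) * (if ‖Y ω (-h)‖ ≠ 0 then 1 else 0) ∂P := by
        calc (∫⁻ x in Set.Ioi (0:ℝ), ENNReal.ofReal (α * x ^ (-α-1)) *
              (∫⁻ ω, Γ (shift h (Y ω)) * ENNReal.ofReal (‖Y ω (-h)‖ ^ (-α)) *
                (if 1 < x * ‖Y ω (-h)‖ then 1 else 0) ∂P))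
            = ∫⁻ x in Set.Ioi (0:ℝ), ∫⁻ ω, ENNReal.ofReal (α * x ^ (-α-1)) *
                (Γ (shift h (Y ω)) * ENNReal.ofReal (‖Y ω (-h)‖ ^ (-α)) *
                  (if 1 < x * ‖Y ω (-h)‖ then 1 else 0)) ∂P :=
              lintegral_congr fun x => (lintegral_const_mul' _ _ ENNReal.ofReal_ne_top).symm
          _ = ∫⁻ ω, (∫⁻ x in Set.Ioi (0:ℝ), ENNReal.ofReal (α * x ^ (-α-1)) *
                (Γ (shift h (Y ω)) * ENNReal.ofReal (‖Y ω (-h)‖ ^ (-α)) *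
                  (if 1 < x * ‖Y ω (-h)‖ then 1 else 0))) ∂P :=
              lintegral_lintegral_swap mg.aemeasurable
          _ = ∫⁻ ω, Γ (shift h (Y ω)) * (if ‖Y ω (-h)‖ ≠ 0 then 1 else 0) ∂P := by
              refine lintegral_congr fun ω => ?_
              have hmx : Measurable fun x : ℝ =>
                  ENNReal.ofReal (α * x ^ (-α-1)) *
                    (if 1 < x * ‖Y ω (-h)‖ then (1:ℝ≥0∞) else 0) :=
                mw1.mul (Measurable.ite (measurableSet_lt measurable_const
                  (measurable_id.mul_const _)) measurable_const measurable_const)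
              calc (∫⁻ x in Set.Ioi (0:ℝ), ENNReal.ofReal (α * x ^ (-α-1)) *
                    (Γ (shift h (Y ω)) * ENNReal.ofReal (‖Y ω (-h)‖ ^ (-α)) *
                      (if 1 < x * ‖Y ω (-h)‖ then 1 else 0)))
                  = ∫⁻ x in Set.Ioi (0:ℝ),
                      (Γ (shift h (Y ω)) * ENNReal.ofReal (‖Y ω (-h)‖ ^ (-α))) *
                      (ENNReal.ofReal (α * x ^ (-α-1)) *
                        (if 1 < x * ‖Y ω (-h)‖ then 1 else 0)) :=
                    lintegral_congr fun x => by ring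
                _ = (Γ (shift h (Y ω)) * ENNReal.ofReal (‖Y ω (-h)‖ ^ (-α))) *
                      ∫⁻ x in Set.Ioi (0:ℝ), ENNReal.ofReal (α * x ^ (-α-1)) *
                        (if 1 < x * ‖Y ω (-h)‖ then 1 else 0) :=
                    lintegral_const_mul _ hmx
                _ = (Γ (shift h (Y ω)) * ENNReal.ofReal (‖Y ω (-h)‖ ^ (-α))) *
                      ENNReal.ofReal (‖Y ω (-h)‖ ^ α) := by
                    rw [lintA hα (norm_nonneg _)]
                _ = Γ (shift h (Y ω)) * (if ‖Y ω (-h)‖ ≠ 0 then 1 else 0) := by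
                    by_cases hn : ‖Y ω (-h)‖ = 0
                    · simp [hn, Real.zero_rpow (neg_ne_zero.2 hα.ne'),
                        Real.zero_rpow hα.ne']
                    · have hn' : 0 < ‖Y ω (-h)‖ := (norm_nonneg _).lt_of_ne (Ne.symm hn)
                      rw [mul_assoc, ← ENNReal.ofReal_mul
                          (Real.rpow_nonneg (norm_nonneg _) _),
                        ← Real.rpow_add hn', neg_add_cancel, Real.rpow_zero,
                        ENNReal.ofReal_one, mul_one, if_pos hn, mul_one]
      have swapR :
          (∫⁻ x in Set.Ioi (0:ℝ), ENNReal.ofReal (α * x ^ (α-1)) *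
            (∫⁻ ω, Γ (Y ω) * ENNReal.ofReal (‖Y ω 0‖ ^ (-α)) *
              (if x < ‖Y ω h‖ then 1 else 0) ∂P))
          = ∫⁻ ω, Γ (Y ω) * ENNReal.ofReal (‖Y ω 0‖ ^ (-α)) *
              ENNReal.ofReal (‖Y ω h‖ ^ α) ∂P := by
        calc (∫⁻ x in Set.Ioi (0:ℝ), ENNReal.ofReal (α * x ^ (α-1)) *
              (∫⁻ ω, Γ (Y ω) * ENNReal.ofReal (‖Y ω 0‖ ^ (-α)) *
                (if x < ‖Y ω h‖ then 1 else 0) ∂P))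
            = ∫⁻ x in Set.Ioi (0:ℝ), ∫⁻ ω, ENNReal.ofReal (α * x ^ (α-1)) *
                (Γ (Y ω) * ENNReal.ofReal (‖Y ω 0‖ ^ (-α)) *
                  (if x < ‖Y ω h‖ then 1 else 0)) ∂P :=
              lintegral_congr fun x => (lintegral_const_mul' _ _ ENNReal.ofReal_ne_top).symm
          _ = ∫⁻ ω, (∫⁻ x in Set.Ioi (0:ℝ), ENNReal.ofReal (α * x ^ (α-1)) *
                (Γ (Y ω) * ENNReal.ofReal (‖Y ω 0‖ ^ (-α)) *
                  (if x < ‖Y ω h‖ then 1 else 0))) ∂P :=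
              lintegral_lintegral_swap mg2.aemeasurable
          _ = ∫⁻ ω, Γ (Y ω) * ENNReal.ofReal (‖Y ω 0‖ ^ (-α)) *
                ENNReal.ofReal (‖Y ω h‖ ^ α) ∂P := by
              refine lintegral_congr fun ω => ?_
              have hmx : Measurable fun x : ℝ =>
                  ENNReal.ofReal (α * x ^ (α-1)) *
                    (if x < ‖Y ω h‖ then (1:ℝ≥0∞) else 0) :=
                mw2.mul (Measurable.ite (measurableSet_lt measurable_id
                  measurable_const) measurable_const measurable_const)
              calc (∫⁻ x in Set.Ioi (0:ℝ), ENNReal.ofReal (α * x ^ (α-1)) *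
                    (Γ (Y ω) * ENNReal.ofReal (‖Y ω 0‖ ^ (-α)) *
                      (if x < ‖Y ω h‖ then 1 else 0)))
                  = ∫⁻ x in Set.Ioi (0:ℝ),
                      (Γ (Y ω) * ENNReal.ofReal (‖Y ω 0‖ ^ (-α))) *
                      (ENNReal.ofReal (α * x ^ (α-1)) *
                        (if x < ‖Y ω h‖ then 1 else 0)) :=
                    lintegral_congr fun x => by ring
                _ = (Γ (Y ω) * ENNReal.ofReal (‖Y ω 0‖ ^ (-α))) *
                      ∫⁻ x in Set.Ioi (0:ℝ), ENNReal.ofReal (α * x ^ (α-1)) *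
                        (if x < ‖Y ω h‖ then 1 else 0) :=
                    lintegral_const_mul _ hmx
                _ = Γ (Y ω) * ENNReal.ofReal (‖Y ω 0‖ ^ (-α)) *
                      ENNReal.ofReal (‖Y ω h‖ ^ α) := by
                    rw [lintB hα (norm_nonneg _)]
      have bridge :
          (∫⁻ x in Set.Ioi (0:ℝ), ENNReal.ofReal (α * x ^ (-α-1)) *
            (∫⁻ ω, Γ (shift h (Y ω)) * ENNReal.ofReal (‖Y ω (-h)‖ ^ (-α)) *
              (if 1 < x * ‖Y ω (-h)‖ then 1 else 0) ∂P))
          = ∫⁻ x in Set.Ioi (0:ℝ), ENNReal.ofReal (α * x ^ (α-1)) *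
            (∫⁻ ω, Γ (Y ω) * ENNReal.ofReal (‖Y ω 0‖ ^ (-α)) *
              (if x < ‖Y ω h‖ then 1 else 0) ∂P) := by
        refine setLIntegral_congr_fun_ae measurableSet_Ioi (ae_of_all _ fun x hx => ?_)
        have hx : (0:ℝ) < x := hx
        rw [claim1 x hx, ← mul_assoc,
          ← ENNReal.ofReal_mul (by positivity : (0:ℝ) ≤ α * x ^ (-α-1))]
        congr 2
        rw [mul_assoc, ← Real.rpow_add hx, show -α-1+(α+α) = α - 1 by ring]
      have chain : (∫⁻ ω, Γ (shift h (Y ω)) * (if ‖Y ω (-h)‖ ≠ 0 then 1 else 0) ∂P)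
          = ∫⁻ ω, Γ (Y ω) * ENNReal.ofReal (‖Y ω 0‖ ^ (-α)) *
              ENNReal.ofReal (‖Y ω h‖ ^ α) ∂P := by
        rw [← swapL, bridge, swapR]
      -- finally pass to Θ a.e.
      have left_ae : ∀ᵐ ω ∂P,
          ENNReal.ofReal (‖(‖Y ω 0‖⁻¹ • Y ω h : Vsp d)‖ ^ α) *
            Γ (fun t => ‖Y ω 0‖⁻¹ • Y ω t)
          = Γ (Y ω) * ENNReal.ofReal (‖Y ω 0‖ ^ (-α)) *
              ENNReal.ofReal (‖Y ω h‖ ^ α) := by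
        refine ae1.mono fun ω hω => ?_
        have hc : (0:ℝ) < ‖Y ω 0‖ := lt_trans one_pos hω
        have hci : (0:ℝ) < ‖Y ω 0‖⁻¹ := inv_pos.2 hc
        rw [homΓ _ hci (Y ω), Real.rpow_zero, ENNReal.ofReal_one, one_mul, norm_smul,
          Real.norm_eq_abs, abs_of_pos hci, Real.mul_rpow hci.le (norm_nonneg _),
          Real.inv_rpow (norm_nonneg _), ← Real.rpow_neg (norm_nonneg _),
          ENNReal.ofReal_mul (Real.rpow_nonneg (norm_nonneg _) _)]
        ring
      have right_ae : ∀ᵐ ω ∂P,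
          (if ‖(‖Y ω 0‖⁻¹ • Y ω (-h) : Vsp d)‖ ≠ 0 then (1:ℝ≥0∞) else 0) *
            Γ (shift h (fun t => ‖Y ω 0‖⁻¹ • Y ω t))
          = Γ (shift h (Y ω)) * (if ‖Y ω (-h)‖ ≠ 0 then 1 else 0) := by
        refine ae1.mono fun ω hω => ?_
        have hc : (0:ℝ) < ‖Y ω 0‖ := lt_trans one_pos hω
        have hci : (0:ℝ) < ‖Y ω 0‖⁻¹ := inv_pos.2 hc
        have hsh : shift h (fun t => ‖Y ω 0‖⁻¹ • Y ω t)
            = fun t => ‖Y ω 0‖⁻¹ • shift h (Y ω) t := rfl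
        rw [hsh, homΓ _ hci, Real.rpow_zero, ENNReal.ofReal_one, one_mul]
        have hiff : (‖(‖Y ω 0‖⁻¹ • Y ω (-h) : Vsp d)‖ ≠ 0) ↔ (‖Y ω (-h)‖ ≠ 0) := by
          rw [norm_smul, Real.norm_eq_abs, abs_of_pos hci]
          simp [mul_eq_zero, hci.ne']
        rw [if_congr hiff rfl rfl, mul_comm]
      calc (∫⁻ ω, ENNReal.ofReal (‖(‖Y ω 0‖⁻¹ • Y ω h : Vsp d)‖ ^ α) *
              Γ (fun t => ‖Y ω 0‖⁻¹ • Y ω t) ∂P)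
          = ∫⁻ ω, Γ (Y ω) * ENNReal.ofReal (‖Y ω 0‖ ^ (-α)) *
              ENNReal.ofReal (‖Y ω h‖ ^ α) ∂P := lintegral_congr_ae left_ae
        _ = ∫⁻ ω, Γ (shift h (Y ω)) * (if ‖Y ω (-h)‖ ≠ 0 then 1 else 0) ∂P := chain.symm
        _ = ∫⁻ ω, (if ‖(‖Y ω 0‖⁻¹ • Y ω (-h) : Vsp d)‖ ≠ 0 then (1:ℝ≥0∞) else 0) *
              Γ (shift h (fun t => ‖Y ω 0‖⁻¹ • Y ω t)) ∂P :=
            (lintegral_congr_ae right_ae).symm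
end
end
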